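/- arXiv:1902.03957 — 9 statements merged into one kernel-verified Lean document; each statement's English description precedes it below -/
import Mathlib

section
/- If E ⊆ ℝ^d is porous, then there exist a constant C ≥ 1 and an exponent t ∈ (0,d) such that for every x ∈ E and all radii 0 < r < R ≤ 1, the set E ∩ B(x,R) can be covered by at most C(R/r)^t balls of radius r centered in E. -/
open Metric Bornology MeasureTheory Set

open Metric Bornology MeasureTheory Set

lemma exists_maximal_separated {X : Type*} [MetricSpace X] [ProperSpace X]
    {B : Set X} (hB : IsBounded B) {δ : ℝ} (hδ : 0 < δ) :
    ∃ S : Finset X, ↑S ⊆ B ∧ (∀ a ∈ S, ∀ b ∈ S, a ≠ b → δ ≤ dist a b) ∧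
      ∀ p ∈ B, ∃ y ∈ S, dist p y < δ := by
  classical
  obtain ⟨M, hM⟩ := zorn_subset {M : Set X | M ⊆ B ∧ ∀ a ∈ M, ∀ b ∈ M, a ≠ b → δ ≤ dist a b}
    (by
      intro c hc hchain
      refine ⟨⋃₀ c, ⟨sUnion_subset fun s hs => (hc hs).1, ?_⟩, fun s hs => subset_sUnion_of_mem hs⟩
      rintro a ⟨s, hs, has⟩ b ⟨t, ht, hbt⟩ hab
      rcases hchain.total hs ht with h | h
      · exact (hc ht).2 a (h has) b hbt hab
      · exact (hc hs).2 a has b (h hbt) hab)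
  have hMB : M ⊆ B := hM.prop.1
  have hMsep : ∀ a ∈ M, ∀ b ∈ M, a ≠ b → δ ≤ dist a b := hM.prop.2
  have hfin : M.Finite := by
    obtain ⟨t, htfin, hcov⟩ := (Metric.totallyBounded_iff.1
      ((hB.isCompact_closure.totallyBounded).subset subset_closure)) (δ / 3) (by linarith)
    have hsub : M ⊆ ⋃ y ∈ t, M ∩ ball y (δ / 3) := by
      intro a ha
      rcases mem_iUnion₂.1 (hcov (hMB ha)) with ⟨y, hy, hay⟩
      exact mem_iUnion₂.2 ⟨y, hy, ha, hay⟩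
    refine Finite.subset (Finite.biUnion htfin fun y _ => Subsingleton.finite ?_) hsub
    rintro a ⟨haM, ha⟩ b ⟨hbM, hb⟩
    by_contra hab
    have h1 := hMsep a haM b hbM hab
    have h2 : dist a b ≤ dist a y + dist y b := dist_triangle _ _ _
    rw [mem_ball] at ha hb
    rw [dist_comm] at hb
    linarith
  refine ⟨hfin.toFinset, by simpa using hMB, by simpa using hMsep, ?_⟩
  intro p hp
  by_contra h
  push_neg at h
  simp only [Finite.mem_toFinset] at h
  have hpM : p ∉ M := fun hpMem => by
    have := h p hpMem
    simp at this
    linarith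
  have hins : insert p M ∈ {M : Set X | M ⊆ B ∧ ∀ a ∈ M, ∀ b ∈ M, a ≠ b → δ ≤ dist a b} := by
    refine ⟨insert_subset hp hMB, ?_⟩
    rintro a (rfl | ha) b (rfl | hb) hab
    · exact absurd rfl hab
    · exact h b hb
    · rw [dist_comm]; exact h a ha
    · exact hMsep a ha b hb hab
  exact hpM (hM.2 hins (subset_insert p M) (mem_insert p M))


lemma cthickening_exists_near {X : Type*} [MetricSpace X] {s : Set X} {x : X} {δ r : ℝ}
    (hr : δ < r) (hr0 : 0 < r) (hx : x ∈ Metric.cthickening δ s) : ∃ y ∈ s, dist x y < r := by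
  rw [Metric.mem_cthickening_iff] at hx
  have h : EMetric.infEdist x s < ENNReal.ofReal r :=
    lt_of_le_of_lt hx ((ENNReal.ofReal_lt_ofReal_iff hr0).2 hr)
  obtain ⟨y, hy, hxy⟩ := EMetric.infEdist_lt_iff.1 h
  exact ⟨y, hy, edist_lt_ofReal.1 hxy⟩


/-- A set `E ⊆ ℝ^d` is porous if there exists `κ ∈ (0,1]` such that for all `x ∈ E` and
all radii `r ≤ 1` there exists `z ∈ B(x,r)` with `B(z, κr) ⊆ B(x,r) \ E`. -/
def Porous {d : ℕ} (E : Set (EuclideanSpace ℝ (Fin d))) : Prop :=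
  ∃ κ : ℝ, 0 < κ ∧ κ ≤ 1 ∧ ∀ x ∈ E, ∀ r : ℝ, 0 < r → r ≤ 1 →
    ∃ z ∈ Metric.ball x r, Metric.ball z (κ * r) ⊆ Metric.ball x r \ E

set_option maxHeartbeats 1000000 in
/-- If `E ⊆ ℝ^d` is porous, then there exist `C ≥ 1` and `t ∈ (0,d)` such that for every
`x ∈ E` and all `0 < r < R ≤ 1`, the set `E ∩ B(x,R)` can be covered by at most
`C (R/r)^t` balls of radius `r` centered in `E`. -/
theorem porous_covering {d : ℕ} (hd : 0 < d) (E : Set (EuclideanSpace ℝ (Fin d)))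
    (hE : Porous E) :
    ∃ C : ℝ, 1 ≤ C ∧ ∃ t : ℝ, 0 < t ∧ t < d ∧
      ∀ x ∈ E, ∀ r R : ℝ, 0 < r → r < R → R ≤ 1 →
        ∃ F : Finset (EuclideanSpace ℝ (Fin d)), ↑F ⊆ E ∧
          (F.card : ℝ) ≤ C * (R / r) ^ t ∧
          E ∩ Metric.ball x R ⊆ ⋃ y ∈ F, Metric.ball y r := by
  classical
  haveI : Nontrivial (EuclideanSpace ℝ (Fin d)) := Module.nontrivial_of_finrank_pos (R := ℝ)
    (by rw [finrank_euclideanSpace_fin]; exact hd)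
  obtain ⟨κ, hκ0, hκ1, hpor⟩ := hE
  have hd' : (0:ℝ) < d := by exact_mod_cast hd
  set c : ℝ := (κ/12)^d with hc_def
  have hc0 : 0 < c := by positivity
  have hc1 : c < 1 := by
    have h12 : κ/12 < 1 := by linarith
    calc c = (κ/12)^d := rfl
    _ < 1 := pow_lt_one₀ (by positivity) h12 hd.ne'
  have h1c : 0 < 1 - c := by linarith
  set lam : ℝ := min (κ/2) ((1-c) ^ (1/(d:ℝ)) / 2) with hlam_def
  have hlam0 : 0 < lam := lt_min (by linarith) (by positivity)
  have hlam_half : lam ≤ 1/2 := by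
    have h1 : (1-c) ^ (1/(d:ℝ)) ≤ 1 :=
      Real.rpow_le_one h1c.le (by linarith) (by positivity)
    have := min_le_right (κ/2) ((1-c) ^ (1/(d:ℝ)) / 2)
    rw [← hlam_def] at this
    linarith
  have hlam1 : lam < 1 := by linarith
  have hlamκ : lam ≤ κ/2 := min_le_left _ _
  have hlamd : lam ^ (d:ℝ) < 1 - c := by
    have h1 : lam ≤ (1-c)^(1/(d:ℝ))/2 := min_le_right _ _
    have h2 : lam ^ (d:ℝ) ≤ ((1-c)^(1/(d:ℝ))/2) ^ (d:ℝ) :=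
      Real.rpow_le_rpow hlam0.le h1 (by positivity)
    have h3 : ((1-c)^(1/(d:ℝ))/2)^(d:ℝ) = (1-c) / 2^(d:ℝ) := by
      rw [Real.div_rpow (by positivity) (by norm_num), ← Real.rpow_mul h1c.le]
      congr 1
      field_simp
      simp
    have h4 : (1:ℝ) < 2^(d:ℝ) := by
      apply Real.one_lt_rpow_iff_of_pos (by norm_num) |>.2
      exact Or.inl ⟨by norm_num, hd'⟩
    have h5 : (1-c) / 2^(d:ℝ) < 1 - c := by
      rw [div_lt_iff₀ (by positivity)]
      nlinarith
    linarith [h2.trans_lt (h3 ▸ h5)]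
  set s : ℝ := Real.log (1-c) / Real.log lam with hs_def
  have hloglam : Real.log lam < 0 := Real.log_neg hlam0 hlam1
  have hlog1c : Real.log (1-c) < 0 := Real.log_neg h1c (by linarith)
  have hs0 : 0 < s := div_pos_of_neg_of_neg hlog1c hloglam
  have hlam_s : lam ^ s = 1 - c := by
    rw [hs_def, Real.rpow_def_of_pos hlam0]
    rw [mul_comm, div_mul_cancel₀ _ hloglam.ne]
    exact Real.exp_log h1c
  have hsd : s < d := by
    rw [hs_def, div_lt_iff_of_neg hloglam]
    have h6 := Real.log_lt_log (Real.rpow_pos_of_pos hlam0 (d:ℝ)) hlamd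
    rwa [Real.log_rpow hlam0] at h6
  refine ⟨6^d * lam ^ (-s), ?_, (d:ℝ) - s, by linarith, by linarith, ?_⟩
  · have h7 : (1:ℝ) ≤ 6^d := one_le_pow₀ (by norm_num)
    have h8 : (1:ℝ) ≤ lam ^ (-s) :=
      Real.one_le_rpow_of_pos_of_le_one_of_nonpos hlam0 hlam1.le (by linarith)
    nlinarith
  intro x hx r R hr hrR hR1
  have hR0 : 0 < R := hr.trans hrR
  set B : Set (EuclideanSpace ℝ (Fin d)) := E ∩ ball x R with hB_def
  have hBne : B.Nonempty := ⟨x, hx, mem_ball_self hR0⟩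
  have hBbdd : IsBounded B := isBounded_ball.subset inter_subset_right
  set A : ℕ → Set (EuclideanSpace ℝ (Fin d)) := fun k => cthickening (lam^k * R) B ∩ closedBall x (2*R) with hA_def
  have hAsub : ∀ k, A k ⊆ closedBall x (2*R) := fun k => inter_subset_right
  have hAmeas : ∀ k, MeasurableSet (A k) :=
    fun k => ((isClosed_cthickening).inter Metric.isClosed_closedBall).measurableSet
  have hAfin : ∀ k, volume (A k) ≠ ⊤ :=
    fun k => ((measure_mono (hAsub k)).trans_lt measure_closedBall_lt_top).ne
  set ω : ENNReal := volume (ball (0:EuclideanSpace ℝ (Fin d)) 1) with hω_def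
  have hω0 : 0 < ω := measure_ball_pos _ _ one_pos
  have hωfin : ω ≠ ⊤ := measure_ball_lt_top.ne
  set w : ℝ := ω.toReal with hw_def
  have hw0 : 0 < w := ENNReal.toReal_pos hω0.ne' hωfin
  have hvol_ball : ∀ (y : EuclideanSpace ℝ (Fin d)) (ρ : ℝ), 0 ≤ ρ →
      volume (ball y ρ) = ENNReal.ofReal (ρ^d) * ω := by
    intro y ρ hρ
    rw [hω_def, Measure.addHaar_ball volume y hρ, finrank_euclideanSpace_fin]
  -- the key decay step
  have step : ∀ k, (volume (A (k+1))).toReal ≤ (1-c) * (volume (A k)).toReal := by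
    intro k
    set ρ : ℝ := lam^k * R with hρ_def
    have hρ0 : 0 < ρ := by positivity
    have hρR : ρ ≤ R := by
      have : lam^k ≤ 1 := pow_le_one₀ hlam0.le hlam1.le
      nlinarith
    have hρ1 : ρ ≤ 1 := hρR.trans hR1
    obtain ⟨S, hSB, hSsep, hScov⟩ := exists_maximal_separated hBbdd (show (0:ℝ) < 4*ρ by linarith)
    have hz : ∀ y ∈ S, ∃ z, z ∈ ball y ρ ∧ ball z (κ*ρ) ⊆ ball y ρ \ E := by
      intro y hy
      obtain ⟨z, hz1, hz2⟩ := hpor y (hSB hy).1 ρ hρ0 hρ1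
      exact ⟨z, hz1, hz2⟩
    choose! z hz1 hz2 using hz
    have pore_subset : ∀ y ∈ S, ball (z y) (κ*ρ/2) ⊆ A k := by
      intro y hy v hv
      have hvy : v ∈ ball y ρ :=
        ((hz2 y hy) (ball_subset_ball (by nlinarith) hv)).1
      refine ⟨?_, ?_⟩
      · apply cthickening_subset_of_subset _ (singleton_subset_iff.2 (hSB hy))
        rw [cthickening_singleton _ hρ0.le]
        exact ball_subset_closedBall hvy
      · rw [mem_closedBall]
        have h1 := dist_triangle v y x
        have h2 : dist y x < R := mem_ball.1 (hSB hy).2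
        rw [mem_ball] at hvy
        linarith
    have pore_disj_A : ∀ y ∈ S, ∀ v ∈ ball (z y) (κ*ρ/2), v ∉ A (k+1) := by
      intro y hy v hv hvA
      have hdvz : dist v (z y) < κ*ρ/2 := mem_ball.1 hv
      have hκρ : 0 < κ * ρ := mul_pos hκ0 hρ0
      have h8 : lam * ρ ≤ κ*ρ/2 := by
        have := mul_le_mul_of_nonneg_right hlamκ hρ0.le
        linarith [show (κ/2) * ρ = κ*ρ/2 by ring]
      have h8' : lam^(k+1) * R < κ*ρ - dist v (z y) := by
        have heq : lam^(k+1) * R = lam * ρ := by rw [hρ_def]; ring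
        rw [heq]
        linarith
      obtain ⟨p, hpB, hpd⟩ := cthickening_exists_near h8' (by linarith) hvA.1
      have hpz : p ∈ ball (z y) (κ*ρ) := by
        rw [mem_ball]
        have := dist_triangle p v (z y)
        rw [dist_comm p v] at this
        linarith
      exact ((hz2 y hy) hpz).2 hpB.1
    have pores_disj : (↑S : Set (EuclideanSpace ℝ (Fin d))).PairwiseDisjoint (fun y => ball (z y) (κ*ρ/2)) := by
      intro a ha b hb hab
      apply ball_disjoint_ball
      have hsep := hSsep a ha b hb hab
      have hza : dist (z a) a < ρ := mem_ball.1 (hz1 a ha)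
      have hzb : dist (z b) b < ρ := mem_ball.1 (hz1 b hb)
      have h9 : dist a b ≤ dist a (z a) + dist (z a) (z b) + dist (z b) b :=
        dist_triangle4 a (z a) (z b) b
      rw [dist_comm a (z a)] at h9
      nlinarith
    have cover : A k ⊆ ⋃ y ∈ S, ball y (6*ρ) := by
      intro v hv
      obtain ⟨p, hpB, hpd⟩ := cthickening_exists_near (show ρ < 2*ρ by linarith) (by linarith) hv.1
      obtain ⟨y, hy, hpy⟩ := hScov p hpB
      refine mem_iUnion₂.2 ⟨y, hy, mem_ball.2 ?_⟩
      have := dist_triangle v p y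
      linarith
    have up : volume (A k) ≤ (S.card : ENNReal) * (ENNReal.ofReal ((6*ρ)^d) * ω) := by
      calc volume (A k) ≤ volume (⋃ y ∈ S, ball y (6*ρ)) := measure_mono cover
      _ ≤ ∑ y ∈ S, volume (ball y (6*ρ)) := measure_biUnion_finset_le _ _
      _ = (S.card : ENNReal) * (ENNReal.ofReal ((6*ρ)^d) * ω) := by
          rw [Finset.sum_congr rfl (fun y _ => hvol_ball y _ (by positivity)),
            Finset.sum_const, nsmul_eq_mul]
    have low : volume (A (k+1)) + (S.card : ENNReal) * (ENNReal.ofReal ((κ*ρ/2)^d) * ω)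
        ≤ volume (A k) := by
      have hU : volume (⋃ y ∈ S, ball (z y) (κ*ρ/2))
          = (S.card : ENNReal) * (ENNReal.ofReal ((κ*ρ/2)^d) * ω) := by
        rw [measure_biUnion_finset pores_disj (fun y _ => measurableSet_ball),
          Finset.sum_congr rfl (fun y _ => hvol_ball _ _ (by positivity)),
          Finset.sum_const, nsmul_eq_mul]
      have hdisj : Disjoint (A (k+1)) (⋃ y ∈ S, ball (z y) (κ*ρ/2)) := by
        rw [disjoint_iUnion₂_right]
        intro y hy
        rw [disjoint_right]
        intro v hv
        exact fun hvA => pore_disj_A y hy v hv hvA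
      have hmU : MeasurableSet (⋃ y ∈ S, ball (z y) (κ*ρ/2)) :=
        MeasurableSet.biUnion S.countable_toSet (fun y _ => measurableSet_ball)
      calc volume (A (k+1)) + (S.card : ENNReal) * (ENNReal.ofReal ((κ*ρ/2)^d) * ω)
          = volume (A (k+1) ∪ ⋃ y ∈ S, ball (z y) (κ*ρ/2)) := by
            rw [measure_union hdisj hmU, hU]
      _ ≤ volume (A k) := by
            apply measure_mono
            apply union_subset
            · refine inter_subset_inter ?_ subset_rfl
              apply cthickening_mono
              have : lam^(k+1) ≤ lam^k := pow_le_pow_of_le_one hlam0.le hlam1.le (Nat.le_succ k)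
              nlinarith
            · exact iUnion₂_subset pore_subset
    -- convert to reals
    set n : ℝ := (S.card : ℝ) with hn_def
    have hn0 : 0 ≤ n := Nat.cast_nonneg _
    have hfinprod : ∀ q : ℝ, (S.card : ENNReal) * (ENNReal.ofReal q * ω) ≠ ⊤ :=
      fun q => ENNReal.mul_ne_top (ENNReal.natCast_ne_top _)
        (ENNReal.mul_ne_top ENNReal.ofReal_ne_top hωfin)
    have htoReal : ∀ q : ℝ, 0 ≤ q →
        ((S.card : ENNReal) * (ENNReal.ofReal q * ω)).toReal = n * (q * w) := by
      intro q hq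
      rw [ENNReal.toReal_mul, ENNReal.toReal_mul, ENNReal.toReal_ofReal hq,
        ENNReal.toReal_natCast _]
    have up' : (volume (A k)).toReal ≤ n * ((6*ρ)^d * w) := by
      have := ENNReal.toReal_mono (hfinprod _) up
      rwa [htoReal _ (by positivity)] at this
    have low' : (volume (A (k+1))).toReal + n * ((κ*ρ/2)^d * w) ≤ (volume (A k)).toReal := by
      have := ENNReal.toReal_mono (hAfin k) low
      rwa [ENNReal.toReal_add (hAfin (k+1)) (hfinprod _), htoReal _ (by positivity)] at this
    have key : c * (6*ρ)^d = (κ*ρ/2)^d := by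
      rw [hc_def, ← mul_pow]
      congr 1
      ring
    have h10 : c * (volume (A k)).toReal ≤ n * ((κ*ρ/2)^d * w) := by
      calc c * (volume (A k)).toReal ≤ c * (n * ((6*ρ)^d * w)) :=
            mul_le_mul_of_nonneg_left up' hc0.le
      _ = n * ((c * (6*ρ)^d) * w) := by ring
      _ = n * ((κ*ρ/2)^d * w) := by rw [key]
    linarith
  have iter : ∀ k, (volume (A k)).toReal ≤ (1-c)^k * (volume (A 0)).toReal := by
    intro k
    induction k with
    | zero => simp
    | succ k ih =>
      calc (volume (A (k+1))).toReal ≤ (1-c) * (volume (A k)).toReal := step k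
      _ ≤ (1-c) * ((1-c)^k * (volume (A 0)).toReal) := mul_le_mul_of_nonneg_left ih h1c.le
      _ = (1-c)^(k+1) * (volume (A 0)).toReal := by ring
  have hA0 : (volume (A 0)).toReal ≤ (3*R)^d * w := by
    have hsub : A 0 ⊆ ball x (3*R) := by
      intro v hv
      have := mem_closedBall.1 (hAsub 0 hv)
      rw [mem_ball]
      linarith
    have := ENNReal.toReal_mono (ENNReal.mul_ne_top ENNReal.ofReal_ne_top hωfin)
      ((measure_mono hsub).trans_eq (hvol_ball x (3*R) (by positivity)))
    rwa [ENNReal.toReal_mul, ENNReal.toReal_ofReal (by positivity)] at this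
  -- choose scale k
  have hex : ∃ m, lam^m * R < r/2 := by
    obtain ⟨m, hm⟩ := exists_pow_lt_of_lt_one (show (0:ℝ) < r/(2*R) by positivity) hlam1
    refine ⟨m, ?_⟩
    have := mul_lt_mul_of_pos_right hm hR0
    rwa [div_mul_eq_mul_div, show r * R / (2*R) = r/2 by field_simp] at this
  set m := Nat.find hex with hm_def
  have hm1 : lam^m * R < r/2 := Nat.find_spec hex
  have hm0 : m ≠ 0 := by
    intro h
    rw [h, pow_zero, one_mul] at hm1
    linarith
  set k := m - 1 with hk_def
  have hkm : k + 1 = m := Nat.succ_pred_eq_of_pos (Nat.pos_of_ne_zero hm0)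
  have hk1 : r/2 ≤ lam^k * R := not_lt.1 (Nat.find_min hex (by omega))
  have hk2 : lam^(k+1) * R < r/2 := by rw [hkm]; exact hm1
  -- maximal r-separated set
  obtain ⟨T, hTB, hTsep, hTcov⟩ := exists_maximal_separated hBbdd hr
  have hTball : ∀ y ∈ T, ball y (r/2) ⊆ A k := by
    intro y hy v hv
    refine ⟨?_, ?_⟩
    · apply cthickening_subset_of_subset _ (singleton_subset_iff.2 (hTB hy))
      rw [cthickening_singleton _ (by positivity)]
      rw [mem_ball] at hv
      exact mem_closedBall.2 (by linarith)
    · rw [mem_closedBall]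
      have h1 := dist_triangle v y x
      have h2 : dist y x < R := mem_ball.1 (hTB hy).2
      rw [mem_ball] at hv
      linarith
  have hTdisj : (↑T : Set (EuclideanSpace ℝ (Fin d))).PairwiseDisjoint (fun y => ball y (r/2)) := by
    intro a ha b hb hab
    exact ball_disjoint_ball (by linarith [hTsep a ha b hb hab])
  have count : (T.card : ℝ) * ((r/2)^d * w) ≤ (volume (A k)).toReal := by
    have hU : volume (⋃ y ∈ T, ball y (r/2)) = (T.card : ENNReal) * (ENNReal.ofReal ((r/2)^d) * ω) := by
      rw [measure_biUnion_finset hTdisj (fun y _ => measurableSet_ball),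
        Finset.sum_congr rfl (fun y _ => hvol_ball _ _ (by positivity)),
        Finset.sum_const, nsmul_eq_mul]
    have hle : volume (⋃ y ∈ T, ball y (r/2)) ≤ volume (A k) :=
      measure_mono (iUnion₂_subset hTball)
    rw [hU] at hle
    have := ENNReal.toReal_mono (hAfin k) hle
    rwa [ENNReal.toReal_mul, ENNReal.toReal_mul, ENNReal.toReal_ofReal (by positivity),
      ENNReal.toReal_natCast _] at this
  -- exponent computation
  have hcount2 : (T.card : ℝ) * ((r/2)^d * w) ≤ (1-c)^k * ((3*R)^d * w) := by
    calc (T.card : ℝ) * ((r/2)^d * w) ≤ (volume (A k)).toReal := count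
    _ ≤ (1-c)^k * (volume (A 0)).toReal := iter k
    _ ≤ (1-c)^k * ((3*R)^d * w) := mul_le_mul_of_nonneg_left hA0 (by positivity)
  have hTcard : (T.card : ℝ) ≤ (6*R/r)^d * (1-c)^k := by
    have hbase : (6*R/r)^d * (r/2)^d = (3*R)^d := by
      rw [← mul_pow]
      congr 1
      field_simp
      ring
    have hpw : (0:ℝ) < (r/2)^d * w := by positivity
    have h2 : (1-c)^k * ((3*R)^d * w) = ((6*R/r)^d * (1-c)^k) * ((r/2)^d * w) := by
      rw [← hbase]; ring
    exact le_of_mul_le_mul_right (hcount2.trans_eq h2) hpw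
  have hdecay : (1-c)^k ≤ lam^(-s) * (r/R)^s := by
    have e1 : ((1:ℝ)-c)^k = lam ^ (s * k) := by
      rw [← hlam_s, ← Real.rpow_natCast (lam ^ s) k, ← Real.rpow_mul hlam0.le]
    have e2 : lam ^ (s * k) = (lam^(k+1) : ℝ) ^ s * lam ^ (-s) := by
      rw [← Real.rpow_natCast lam (k+1), ← Real.rpow_mul hlam0.le, ← Real.rpow_add hlam0]
      congr 1
      push_cast
      ring
    have e3 : (lam^(k+1) : ℝ) ^ s ≤ (r/(2*R)) ^ s := by
      apply Real.rpow_le_rpow (by positivity) _ hs0.le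
      have hk2' : (lam^(k+1) : ℝ) ≤ r/2/R := by
        rw [le_div_iff₀ hR0]
        exact hk2.le
      calc (lam^(k+1) : ℝ) ≤ r/2/R := hk2'
      _ = r/(2*R) := by ring
    have e4 : (r/(2*R)) ^ s ≤ (r/R) ^ s := by
      apply Real.rpow_le_rpow (by positivity) _ hs0.le
      rw [div_le_div_iff₀ (by positivity) (by positivity)]
      nlinarith
    calc ((1:ℝ)-c)^k = (lam^(k+1) : ℝ) ^ s * lam ^ (-s) := by rw [e1, e2]
    _ ≤ (r/R) ^ s * lam ^ (-s) :=
        mul_le_mul_of_nonneg_right (e3.trans e4) (Real.rpow_nonneg hlam0.le _)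
    _ = lam^(-s) * (r/R)^s := mul_comm _ _
  refine ⟨T, hTB.trans inter_subset_left, ?_, ?_⟩
  · calc (T.card : ℝ) ≤ (6*R/r)^d * (1-c)^k := hTcard
    _ ≤ (6*R/r)^d * (lam^(-s) * (r/R)^s) :=
        mul_le_mul_of_nonneg_left hdecay (by positivity)
    _ = 6^d * lam^(-s) * ((R/r)^d * (r/R)^s) := by
        rw [show (6*R/r)^d = 6^d * (R/r)^d by rw [← mul_pow]; congr 1; ring]
        ring
    _ = 6^d * lam^(-s) * (R/r)^((d:ℝ) - s) := by
        congr 1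
        have hq0 : (0:ℝ) < R/r := by positivity
        rw [show (r/R) = (R/r)⁻¹ by rw [inv_div], Real.inv_rpow hq0.le,
          ← Real.rpow_neg hq0.le, ← Real.rpow_natCast (R/r) d, ← Real.rpow_add hq0, sub_eq_add_neg]
  · intro p hp
    obtain ⟨y, hy, hpy⟩ := hTcov p hp
    exact mem_iUnion₂.2 ⟨y, hy, mem_ball.2 hpy⟩
end

section
/- Strip estimate near an Ahlfors–David regular set: Let D ⊆ ℝ^d be a closed Ahlfors–David regular set. For x ∈ D, r ∈ (0, 2 diam(D)) and h ∈ (0, r), define E_{r,h} = {y ∈ B(x,r) : dist(y, D) ≤ h}. Then the Lebesgue measure satisfies |E_{r,h}| ≤ K h r^{d−1}, where K depends only on D and d. -/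
open MeasureTheory Metric Set ENNReal


lemma strip_aux_sep {d : ℕ} (s : Set (EuclideanSpace ℝ (Fin d)))
    (x₀ : EuclideanSpace ℝ (Fin d)) (R : ℝ) (hsub : s ⊆ closedBall x₀ R) (hd : 1 ≤ d)
    {h : ℝ} (hh : 0 < h) :
    ∃ T : Finset (EuclideanSpace ℝ (Fin d)), ↑T ⊆ s ∧
      ((T : Set (EuclideanSpace ℝ (Fin d))).Pairwise fun a b => h ≤ dist a b) ∧
      ∀ z ∈ s, ∃ t ∈ T, dist z t < h := by
  haveI : Nontrivial (EuclideanSpace ℝ (Fin d)) := by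
    obtain ⟨e, rfl⟩ : ∃ e, d = e + 1 := ⟨d - 1, (Nat.succ_pred_eq_of_pos hd).symm⟩
    infer_instance
  set 𝒜 : Set (Set (EuclideanSpace ℝ (Fin d))) :=
      {T : Set (EuclideanSpace ℝ (Fin d)) | T ⊆ s ∧ T.Pairwise fun a b => h ≤ dist a b} with h𝒜
  have hchainub : ∀ c ⊆ 𝒜, IsChain (· ⊆ ·) c → ∃ ub ∈ 𝒜, ∀ s ∈ c, s ⊆ ub := by
    intro c hc hchain
    refine ⟨⋃₀ c, ⟨sUnion_subset fun t ht => (hc ht).1, ?_⟩, fun t ht => subset_sUnion_of_mem ht⟩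
    intro a ha b hb hab
    obtain ⟨ta, hta, ha⟩ := ha
    obtain ⟨tb, htb, hb⟩ := hb
    rcases hchain.total hta htb with hle | hle
    · exact (hc htb).2 (hle ha) hb hab
    · exact (hc hta).2 ha (hle hb) hab
  obtain ⟨m, hm⟩ := zorn_subset 𝒜 hchainub
  have hms : m ⊆ s := hm.1.1
  have hmp : m.Pairwise fun a b => h ≤ dist a b := hm.1.2
  -- maximality gives covering
  have hcov : ∀ z ∈ s, ∃ t ∈ m, dist z t < h := by
    intro z hz
    by_contra hcon
    push_neg at hcon
    have hzm : z ∉ m := fun hzm => absurd (hcon z hzm) (by simp [hh])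
    have hins : insert z m ∈ 𝒜 := by
      refine ⟨insert_subset hz hms, ?_⟩
      haveI : Std.Symm (fun a b : EuclideanSpace ℝ (Fin d) => h ≤ dist a b) :=
        ⟨fun a b hab => by rwa [dist_comm]⟩
      rw [Set.pairwise_insert_of_symm]
      exact ⟨hmp, fun b hb _ => hcon b hb⟩
    have := hm.2 hins (subset_insert z m)
    exact hzm (this (mem_insert z m))
  -- finiteness via volume packing
  have hfin : m.Finite := by
    by_contra hinf
    replace hinf : m.Infinite := hinf
    set ε : ℝ≥0∞ := ENNReal.ofReal ((h / 2) ^ d) * volume (ball (0 : EuclideanSpace ℝ (Fin d)) 1) with hε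
    have hε0 : ε ≠ 0 := by
      refine mul_ne_zero ?_ ?_
      · simp [ENNReal.ofReal_eq_zero, not_le, pow_pos (half_pos hh)]
      · exact (measure_ball_pos volume _ one_pos).ne'
    have hεtop : ε ≠ ⊤ := ENNReal.mul_ne_top ENNReal.ofReal_ne_top measure_ball_lt_top.ne
    set V : ℝ≥0∞ := volume (closedBall x₀ (R + h)) with hV
    have hVtop : V ≠ ⊤ := measure_closedBall_lt_top.ne
    obtain ⟨n, hn⟩ := ENNReal.exists_nat_gt (ENNReal.div_lt_top hVtop hε0).ne
    obtain ⟨t, hts, htf, htc⟩ := hinf.exists_subset_ncard_eq n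
    set S : Finset (EuclideanSpace ℝ (Fin d)) := htf.toFinset with hS
    have hSm : ↑S ⊆ m := by rwa [hS, Set.Finite.coe_toFinset]
    have hcard : S.card = n := by rw [hS, ← Set.ncard_coe_finset, Set.Finite.coe_toFinset]; exact htc
    have hdisj : (↑S : Set (EuclideanSpace ℝ (Fin d))).PairwiseDisjoint
        (fun t => ball t (h / 2)) := by
      intro a ha b hb hab
      exact ball_disjoint_ball (by linarith [hmp (hSm ha) (hSm hb) hab])
    have hsum : ∑ a ∈ S, volume (ball a (h / 2)) ≤ V := by
      rw [← measure_biUnion_finset hdisj (fun b _ => measurableSet_ball)]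
      refine measure_mono ?_
      intro y hy
      simp only [Set.mem_iUnion] at hy
      obtain ⟨a, haS, hya⟩ := hy
      have haB : a ∈ closedBall x₀ R := hsub (hms (hSm haS))
      have : dist y x₀ ≤ dist y a + dist a x₀ := dist_triangle _ _ _
      simp only [mem_ball] at hya
      simp only [mem_closedBall] at haB ⊢
      linarith
    have heach : ∀ a ∈ S, volume (ball a (h / 2)) = ε := by
      intro a _
      rw [Measure.addHaar_ball volume a (half_pos hh).le, finrank_euclideanSpace_fin, hε]
    rw [Finset.sum_congr rfl heach, Finset.sum_const, hcard, nsmul_eq_mul] at hsum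
    have : (n : ℝ≥0∞) ≤ V / ε := (ENNReal.le_div_iff_mul_le (Or.inl hε0) (Or.inl hεtop)).2 hsum
    exact absurd this (not_le.2 hn)
  refine ⟨hfin.toFinset, ?_, ?_, ?_⟩
  · rwa [Set.Finite.coe_toFinset]
  · rwa [Set.Finite.coe_toFinset]
  · intro z hz
    obtain ⟨t, htm, htz⟩ := hcov z hz
    exact ⟨t, hfin.mem_toFinset.2 htm, htz⟩


/-- Strip estimate near an Ahlfors–David regular set: if `D ⊆ ℝ^d` is closed and
Ahlfors–David regular, then for `x ∈ D`, `r ∈ (0, 2 diam D)` and `h ∈ (0,r)`, the set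
`E_{r,h} = {y ∈ B(x,r) : dist(y,D) ≤ h}` satisfies `|E_{r,h}| ≤ K h r^{d-1}` with `K`
depending only on `D` and `d`. -/
theorem strip_estimate_near_ADR {d : ℕ} (hd : 1 ≤ d) (D : Set (EuclideanSpace ℝ (Fin d)))
    (hDclosed : IsClosed D) (c C : ℝ) (hc : 0 < c) (hcC : c ≤ C)
    (hADR : ∀ x ∈ D, ∀ r : ℝ, 0 < r → ENNReal.ofReal r < EMetric.diam D →
      ENNReal.ofReal (c * r ^ (d - 1)) ≤ μH[((d : ℝ) - 1)] (D ∩ Metric.ball x r) ∧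
      μH[((d : ℝ) - 1)] (D ∩ Metric.ball x r) ≤ ENNReal.ofReal (C * r ^ (d - 1))) :
    ∃ K : ℝ, 0 < K ∧ ∀ x ∈ D, ∀ r h : ℝ, 0 < r → ENNReal.ofReal r < 2 * EMetric.diam D →
      0 < h → h < r →
      volume {y | dist y x < r ∧ Metric.infDist y D ≤ h} ≤
        ENNReal.ofReal (K * h * r ^ (d - 1)) := by
  obtain ⟨e, rfl⟩ : ∃ e, d = e + 1 := ⟨d - 1, (Nat.succ_pred_eq_of_pos hd).symm⟩
  simp only [Nat.add_sub_cancel] at hADR ⊢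
  rcases D.eq_empty_or_nonempty with rfl | hne
  · exact ⟨1, one_pos, by simp⟩
  set ι : ℝ≥0∞ := volume (ball (0 : EuclideanSpace ℝ (Fin (e + 1))) 1) with hι
  set Δ : ℝ≥0∞ := EMetric.diam D with hΔdef
  set Ξ : ℝ≥0∞ := if Δ ≠ ⊤ ∧ Δ ≠ 0 then
      μH[(↑(e + 1) - 1 : ℝ)] D * ENNReal.ofReal (3 ^ e) / Δ ^ e else 0 with hΞ
  set Λ : ℝ≥0∞ := ENNReal.ofReal (C * 3 ^ e) + Ξ with hΛ
  set 𝒦 : ℝ≥0∞ := ι * ENNReal.ofReal ((3 / 2) ^ (e + 1)) +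
      Λ * ι * ENNReal.ofReal (2 ^ (2 * e + 1) / c) with h𝒦
  -- Ξ is finite
  have hΞtop : Ξ ≠ ⊤ := by
    rw [hΞ]
    split_ifs with hg
    · obtain ⟨hgt, hg0⟩ := hg
      have hcomp : IsCompact D :=
        Metric.isCompact_of_isClosed_isBounded hDclosed (Metric.isBounded_iff_ediam_ne_top.2 hgt)
      set ρ : ℝ := Δ.toReal / 2 with hρdef
      have hρ0 : 0 < ρ := by
        have := ENNReal.toReal_pos hg0 hgt
        rw [hρdef]; linarith
      have hρΔ : ENNReal.ofReal ρ < Δ := by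
        rw [hρdef]
        calc ENNReal.ofReal (Δ.toReal / 2) < ENNReal.ofReal Δ.toReal := by
              rw [ENNReal.ofReal_lt_ofReal_iff (ENNReal.toReal_pos hg0 hgt)]
              linarith [ENNReal.toReal_pos hg0 hgt]
          _ = Δ := ENNReal.ofReal_toReal hgt
      obtain ⟨F, hFD, hFfin, hFcov⟩ := hcomp.elim_finite_subcover_image
        (b := D) (c := fun z => ball z ρ) (fun z _ => isOpen_ball)
        (fun y hy => Set.mem_iUnion₂.2 ⟨y, hy, mem_ball_self hρ0⟩)
      have hμ : μH[(↑(e + 1) - 1 : ℝ)] D ≤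
          ∑ z ∈ hFfin.toFinset, μH[(↑(e + 1) - 1 : ℝ)] (D ∩ ball z ρ) := by
        refine le_trans (measure_mono ?_) (measure_biUnion_finset_le _ _)
        intro y hy
        have := hFcov hy
        rw [Set.mem_iUnion₂] at this
        obtain ⟨z, hzF, hyz⟩ := this
        exact Set.mem_iUnion₂.2 ⟨z, hFfin.mem_toFinset.2 hzF, hy, hyz⟩
      have hbd : ∀ z ∈ hFfin.toFinset,
          μH[(↑(e + 1) - 1 : ℝ)] (D ∩ ball z ρ) ≤ ENNReal.ofReal (C * ρ ^ e) :=
        fun z hz => (hADR z (hFD (hFfin.mem_toFinset.1 hz)) ρ hρ0 hρΔ).2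
      have hfin : μH[(↑(e + 1) - 1 : ℝ)] D < ⊤ := by
        refine lt_of_le_of_lt (hμ.trans (Finset.sum_le_sum hbd)) ?_
        rw [Finset.sum_const, nsmul_eq_mul]
        exact ENNReal.mul_lt_top (ENNReal.natCast_lt_top _) ENNReal.ofReal_lt_top
      exact (ENNReal.div_lt_top (ENNReal.mul_ne_top hfin.ne ENNReal.ofReal_ne_top)
        (pow_ne_zero e hg0)).ne
    · exact ENNReal.zero_ne_top
  have h𝒦top : 𝒦 ≠ ⊤ := by
    rw [h𝒦, hΛ]
    refine ENNReal.add_ne_top.2 ⟨ENNReal.mul_ne_top measure_ball_lt_top.ne ENNReal.ofReal_ne_top,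
      ENNReal.mul_ne_top (ENNReal.mul_ne_top
        (ENNReal.add_ne_top.2 ⟨ENNReal.ofReal_ne_top, hΞtop⟩) measure_ball_lt_top.ne)
        ENNReal.ofReal_ne_top⟩
  refine ⟨𝒦.toReal + 1, by positivity, ?_⟩
  intro x hx r h hr0 hrΔ hh0 hhr
  have hΔ0 : Δ ≠ 0 := by
    intro h0
    rw [h0, mul_zero] at hrΔ
    exact ENNReal.not_lt_zero hrΔ
  have key : volume {y | dist y x < r ∧ infDist y D ≤ h} ≤
      𝒦 * (ENNReal.ofReal h * ENNReal.ofReal (r ^ e)) := by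
    by_cases hsmall : Δ ≤ ENNReal.ofReal (h / 2)
    · -- tiny diameter case
      have hΔtop : Δ ≠ ⊤ := (lt_of_le_of_lt hsmall ENNReal.ofReal_lt_top).ne
      have hdiam : Δ.toReal ≤ h / 2 := ENNReal.toReal_le_of_le_ofReal (by linarith) hsmall
      have hsub1 : {y | dist y x < r ∧ infDist y D ≤ h} ⊆ closedBall x (3 / 2 * h) := by
        rintro y ⟨hy1, hy2⟩
        obtain ⟨z, hzD, hz⟩ := hDclosed.exists_infDist_eq_dist hne y
        have h1 : dist y z ≤ h := by rw [← hz]; exact hy2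
        have h2 : dist z x ≤ h / 2 :=
          le_trans (Metric.dist_le_diam_of_mem
            (Metric.isBounded_iff_ediam_ne_top.2 hΔtop) hzD hx) hdiam
        have h3 := dist_triangle y z x
        simp only [mem_closedBall]
        linarith
      have hre : (3 / 2 * h) ^ (e + 1) ≤ (3 / 2) ^ (e + 1) * (h * r ^ e) := by
        rw [mul_pow, pow_succ h e]
        have h1 : h ^ e ≤ r ^ e := pow_le_pow_left₀ hh0.le hhr.le e
        have h2 : h ^ e * h ≤ h * r ^ e := by
          rw [mul_comm h (r ^ e)]
          exact mul_le_mul_of_nonneg_right h1 hh0.le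
        exact mul_le_mul_of_nonneg_left h2 (by positivity)
      calc volume {y | dist y x < r ∧ infDist y D ≤ h}
          ≤ volume (closedBall x (3 / 2 * h)) := measure_mono hsub1
        _ = ENNReal.ofReal ((3 / 2 * h) ^ (e + 1)) * ι := by
            rw [Measure.addHaar_closedBall volume x (by positivity), finrank_euclideanSpace_fin]
        _ ≤ ENNReal.ofReal ((3 / 2) ^ (e + 1) * (h * r ^ e)) * ι :=
            mul_le_mul_left (ENNReal.ofReal_le_ofReal hre) ι
        _ = (ι * ENNReal.ofReal ((3 / 2) ^ (e + 1))) *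
              (ENNReal.ofReal h * ENNReal.ofReal (r ^ e)) := by
            rw [ENNReal.ofReal_mul (by positivity), ENNReal.ofReal_mul hh0.le]; ring
        _ ≤ 𝒦 * (ENNReal.ofReal h * ENNReal.ofReal (r ^ e)) :=
            mul_le_mul_left le_self_add _
    · push_neg at hsmall
      obtain ⟨T, hTs, hTp, hTcov⟩ :=
        strip_aux_sep (D ∩ closedBall x (r + h)) x (r + h) Set.inter_subset_right hd hh0
      have hcover : {y | dist y x < r ∧ infDist y D ≤ h} ⊆ ⋃ t ∈ T, closedBall t (2 * h) := by
        rintro y ⟨hy1, hy2⟩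
        obtain ⟨z, hzD, hz⟩ := hDclosed.exists_infDist_eq_dist hne y
        have h1 : dist y z ≤ h := by rw [← hz]; exact hy2
        have h2 : z ∈ D ∩ closedBall x (r + h) := by
          refine ⟨hzD, ?_⟩
          simp only [mem_closedBall]
          have := dist_triangle z y x
          rw [dist_comm z y] at this
          linarith
        obtain ⟨t, htT, htz⟩ := hTcov z h2
        refine Set.mem_iUnion₂.2 ⟨t, htT, ?_⟩
        simp only [mem_closedBall]
        have := dist_triangle y z t
        linarith
      have hvol : volume {y | dist y x < r ∧ infDist y D ≤ h} ≤
          (T.card : ℝ≥0∞) * (ENNReal.ofReal ((2 * h) ^ (e + 1)) * ι) := by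
        calc volume {y | dist y x < r ∧ infDist y D ≤ h}
            ≤ volume (⋃ t ∈ T, closedBall t (2 * h)) := measure_mono hcover
          _ ≤ ∑ t ∈ T, volume (closedBall t (2 * h)) := measure_biUnion_finset_le T _
          _ = T.card * (ENNReal.ofReal ((2 * h) ^ (e + 1)) * ι) := by
              rw [Finset.sum_congr rfl (fun t _ => by
                rw [Measure.addHaar_closedBall volume t (by positivity),
                  finrank_euclideanSpace_fin]), Finset.sum_const, nsmul_eq_mul]
      have hcount : (T.card : ℝ≥0∞) * ENNReal.ofReal (c * (h / 2) ^ e) ≤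
          Λ * ENNReal.ofReal (r ^ e) := by
        have hdisj : (↑T : Set (EuclideanSpace ℝ (Fin (e + 1)))).PairwiseDisjoint
            (fun t => D ∩ ball t (h / 2)) := by
          intro a ha b hb hab
          exact Disjoint.mono Set.inter_subset_right Set.inter_subset_right
            (ball_disjoint_ball (by linarith [hTp ha hb hab]))
        have hsum : (T.card : ℝ≥0∞) * ENNReal.ofReal (c * (h / 2) ^ e) ≤
            μH[(↑(e + 1) - 1 : ℝ)] (D ∩ ball x (3 * r)) := by
          calc (T.card : ℝ≥0∞) * ENNReal.ofReal (c * (h / 2) ^ e)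
              = ∑ _t ∈ T, ENNReal.ofReal (c * (h / 2) ^ e) := by
                rw [Finset.sum_const, nsmul_eq_mul]
            _ ≤ ∑ t ∈ T, μH[(↑(e + 1) - 1 : ℝ)] (D ∩ ball t (h / 2)) :=
                Finset.sum_le_sum fun t ht =>
                  (hADR t (hTs (Finset.mem_coe.2 ht)).1 (h / 2) (half_pos hh0) hsmall).1
            _ = μH[(↑(e + 1) - 1 : ℝ)] (⋃ t ∈ T, D ∩ ball t (h / 2)) :=
                (measure_biUnion_finset hdisj fun t _ =>
                  hDclosed.measurableSet.inter measurableSet_ball).symm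
            _ ≤ μH[(↑(e + 1) - 1 : ℝ)] (D ∩ ball x (3 * r)) := by
                refine measure_mono ?_
                rintro y hy
                rw [Set.mem_iUnion₂] at hy
                obtain ⟨t, htT, hyD, hyt⟩ := hy
                refine ⟨hyD, ?_⟩
                have htx : dist t x ≤ r + h := (hTs (Finset.mem_coe.2 htT)).2
                simp only [mem_ball] at hyt ⊢
                have := dist_triangle y t x
                linarith
        refine hsum.trans ?_
        by_cases hA : ENNReal.ofReal (3 * r) < Δ
        · refine le_trans (hADR x hx (3 * r) (by linarith) hA).2 ?_
          have hC0 : (0:ℝ) < C := lt_of_lt_of_le hc hcC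
          rw [show C * (3 * r) ^ e = C * 3 ^ e * r ^ e by ring,
            ENNReal.ofReal_mul (by positivity)]
          exact mul_le_mul_left le_self_add _
        · push_neg at hA
          have hΔtop : Δ ≠ ⊤ := (lt_of_le_of_lt hA ENNReal.ofReal_lt_top).ne
          have hΞeq : Ξ = μH[(↑(e + 1) - 1 : ℝ)] D * ENNReal.ofReal (3 ^ e) / Δ ^ e := by
            rw [hΞ, if_pos ⟨hΔtop, hΔ0⟩]
          have hpow : Δ ^ e ≤ ENNReal.ofReal (3 ^ e) * ENNReal.ofReal (r ^ e) := by
            calc Δ ^ e ≤ (ENNReal.ofReal (3 * r)) ^ e := pow_le_pow_left' hA e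
              _ = _ := by
                  rw [← ENNReal.ofReal_pow (by linarith), mul_pow,
                    ENNReal.ofReal_mul (by positivity), ENNReal.ofReal_pow (by norm_num)]
          have hfrac : (1 : ℝ≥0∞) ≤ ENNReal.ofReal (3 ^ e) * ENNReal.ofReal (r ^ e) / Δ ^ e := by
            rw [ENNReal.le_div_iff_mul_le (Or.inl (pow_ne_zero e hΔ0))
              (Or.inl (ENNReal.pow_ne_top hΔtop)), one_mul]
            exact hpow
          calc μH[(↑(e + 1) - 1 : ℝ)] (D ∩ ball x (3 * r))
              ≤ μH[(↑(e + 1) - 1 : ℝ)] D := measure_mono Set.inter_subset_left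
            _ = μH[(↑(e + 1) - 1 : ℝ)] D * 1 := (mul_one _).symm
            _ ≤ μH[(↑(e + 1) - 1 : ℝ)] D *
                (ENNReal.ofReal (3 ^ e) * ENNReal.ofReal (r ^ e) / Δ ^ e) :=
                mul_le_mul_right hfrac _
            _ = Ξ * ENNReal.ofReal (r ^ e) := by
                rw [hΞeq]; simp only [div_eq_mul_inv]; ring
            _ ≤ Λ * ENNReal.ofReal (r ^ e) := mul_le_mul_left le_add_self _
      -- combine
      have ha0 : ENNReal.ofReal (c * (h / 2) ^ e) ≠ 0 := by
        rw [ne_eq, ENNReal.ofReal_eq_zero, not_le]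
        positivity
      have hN : (T.card : ℝ≥0∞) ≤ Λ * ENNReal.ofReal (r ^ e) / ENNReal.ofReal (c * (h / 2) ^ e) :=
        (ENNReal.le_div_iff_mul_le (Or.inl ha0) (Or.inl ENNReal.ofReal_ne_top)).2 hcount
      have hreal : (2 * h) ^ (e + 1) / (c * (h / 2) ^ e) = 2 ^ (2 * e + 1) / c * h := by
        rw [mul_pow, div_pow]
        have h2e : (2:ℝ) ^ (2 * e + 1) = 2 ^ (e + 1) * 2 ^ e := by
          rw [← pow_add]; ring_nf
        field_simp [h2e]
        ring
      calc volume {y | dist y x < r ∧ infDist y D ≤ h}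
          ≤ (T.card : ℝ≥0∞) * (ENNReal.ofReal ((2 * h) ^ (e + 1)) * ι) := hvol
        _ ≤ (Λ * ENNReal.ofReal (r ^ e) / ENNReal.ofReal (c * (h / 2) ^ e)) *
              (ENNReal.ofReal ((2 * h) ^ (e + 1)) * ι) := mul_le_mul_left hN _
        _ = (Λ * ι * (ENNReal.ofReal ((2 * h) ^ (e + 1)) / ENNReal.ofReal (c * (h / 2) ^ e))) *
              ENNReal.ofReal (r ^ e) := by simp only [div_eq_mul_inv]; ring
        _ = (Λ * ι * ENNReal.ofReal (2 ^ (2 * e + 1) / c * h)) * ENNReal.ofReal (r ^ e) := by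
            rw [← ENNReal.ofReal_div_of_pos (by positivity), hreal]
        _ = (Λ * ι * ENNReal.ofReal (2 ^ (2 * e + 1) / c)) *
              (ENNReal.ofReal h * ENNReal.ofReal (r ^ e)) := by
            rw [ENNReal.ofReal_mul (by positivity)]; ring
        _ ≤ 𝒦 * (ENNReal.ofReal h * ENNReal.ofReal (r ^ e)) := by
            refine mul_le_mul_left ?_ _
            rw [h𝒦]
            exact le_add_self
  refine key.trans ?_
  calc 𝒦 * (ENNReal.ofReal h * ENNReal.ofReal (r ^ e))
      ≤ ENNReal.ofReal (𝒦.toReal + 1) * (ENNReal.ofReal h * ENNReal.ofReal (r ^ e)) := by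
        refine mul_le_mul_left ?_ _
        calc 𝒦 = ENNReal.ofReal 𝒦.toReal := (ENNReal.ofReal_toReal h𝒦top).symm
          _ ≤ ENNReal.ofReal (𝒦.toReal + 1) := ENNReal.ofReal_le_ofReal (by linarith)
    _ = ENNReal.ofReal ((𝒦.toReal + 1) * h * r ^ e) := by
        rw [ENNReal.ofReal_mul (by positivity), ENNReal.ofReal_mul (by positivity), mul_assoc]
end

section
/- Corkscrew condition for locally uniform domains: Suppose O ⊆ ℝ^d is open and locally an (ε,δ)-domain near N ⊆ ∂O. Then there exists κ ∈ (0,1] such that for every x in the closure of N_{δ/2} ∩ O and every radius r ≤ 1 there exists a point z ∈ B(x,r) with B(z, κr) ⊆ O ∩ B(x,r). -/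
/-- The open `δ`-neighborhood of a set `N`. -/
def Nbhd {d : ℕ} (N : Set (EuclideanSpace ℝ (Fin d))) (δ : ℝ) :
    Set (EuclideanSpace ℝ (Fin d)) :=
  {z | ∃ y ∈ N, dist z y < δ}

/-- `O` is locally an `(ε,δ)`-domain near `N ⊆ ∂O`: (i) any two distinct points
`x,y ∈ O ∩ N_δ` with `|x-y| < δ` can be joined in `O` by a rectifiable curve of length
at most `ε⁻¹|x-y|` satisfying the cigar condition
`dist(z, ∂O ∩ N_δ) ≥ ε |z-x||z-y| / |x-y|` along the curve; (ii) positive radius: there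
is `c > 0` such that every connected component `O'` of `O` with `∂O' ∩ N ≠ ∅` has
`diam O' ≥ c`. -/
def LocallyEpsDeltaDomain {d : ℕ} (O N : Set (EuclideanSpace ℝ (Fin d)))
    (ε δ : ℝ) : Prop :=
  (∀ x ∈ O ∩ Nbhd N δ, ∀ y ∈ O ∩ Nbhd N δ, x ≠ y → dist x y < δ →
    ∃ γ : ℝ → EuclideanSpace ℝ (Fin d),
      ContinuousOn γ (Set.Icc 0 1) ∧ γ 0 = x ∧ γ 1 = y ∧
      Set.MapsTo γ (Set.Icc 0 1) O ∧
      eVariationOn γ (Set.Icc 0 1) ≤ ENNReal.ofReal (ε⁻¹ * dist x y) ∧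
      ∀ s ∈ Set.Icc (0:ℝ) 1, ∀ w ∈ frontier O ∩ Nbhd N δ,
        ε * dist (γ s) x * dist (γ s) y / dist x y ≤ dist (γ s) w) ∧
  ∃ c : ℝ, 0 < c ∧ ∀ x ∈ O, (frontier (connectedComponentIn O x) ∩ N).Nonempty →
    ENNReal.ofReal c ≤ EMetric.diam (connectedComponentIn O x)

open Set Metric

lemma subset_of_preconnected_of_disjoint_frontier {X : Type*} [TopologicalSpace X]
    {s t : Set X} (hs : IsPreconnected s) (ht : IsOpen t)
    (hdisj : s ∩ frontier t = ∅) {z : X} (hz : z ∈ s) (hzt : z ∈ t) : s ⊆ t := by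
  have key : ∀ q ∈ s, q ∈ closure t → q ∈ t := by
    intro q hq hqc
    by_contra hqt
    have : q ∈ s ∩ frontier t := ⟨hq, hqc, by rwa [ht.interior_eq]⟩
    rw [hdisj] at this; exact this
  have hsu : s ⊆ t ∪ (closure t)ᶜ := by
    intro q hq
    by_cases hqc : q ∈ closure t
    · exact Or.inl (key q hq hqc)
    · exact Or.inr hqc
  intro q hq
  by_contra hqt
  have hq' : q ∈ (closure t)ᶜ := fun hc => hqt (key q hq hc)
  obtain ⟨w, _, hw1, hw2⟩ := hs t (closure t)ᶜ ht isClosed_closure.isOpen_compl hsu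
    ⟨z, hz, hzt⟩ ⟨q, hq, hq'⟩
  exact hw2 (subset_closure hw1)

set_option maxHeartbeats 1000000

/-- Corkscrew condition for locally uniform domains: if `O ⊆ ℝ^d` is open and locally an
`(ε,δ)`-domain near `N ⊆ ∂O`, then there is `κ ∈ (0,1]` such that for every `x` in the
closure of `N_{δ/2} ∩ O` and every `r ≤ 1` there is `z ∈ B(x,r)` with
`B(z,κr) ⊆ O ∩ B(x,r)`. -/
theorem corkscrew_of_locallyUniform {d : ℕ} (O N : Set (EuclideanSpace ℝ (Fin d)))
    (hO : IsOpen O) (hN : N ⊆ frontier O) (ε δ : ℝ) (hε : 0 < ε) (hε1 : ε ≤ 1)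
    (hδ : 0 < δ) (h : LocallyEpsDeltaDomain O N ε δ) :
    ∃ κ : ℝ, 0 < κ ∧ κ ≤ 1 ∧
      ∀ x ∈ closure (Nbhd N (δ / 2) ∩ O), ∀ r : ℝ, 0 < r → r ≤ 1 →
        ∃ z ∈ Metric.ball x r, Metric.ball z (κ * r) ⊆ O ∩ Metric.ball x r := by
  obtain ⟨hcurve, c, hc, hdiam⟩ := h
  set m : ℝ := min (min 1 c) δ / 8 with hm_def
  have hmin0 : 0 < min (min 1 c) δ := lt_min (lt_min one_pos hc) hδ
  have hm0 : 0 < m := by rw [hm_def]; linarith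
  have hm1 : m ≤ 1 / 8 := by
    have := min_le_left (min 1 c) δ
    have := min_le_left (1:ℝ) c
    rw [hm_def]; linarith
  have hmc : m ≤ c / 8 := by
    have := min_le_left (min 1 c) δ
    have := min_le_right (1:ℝ) c
    rw [hm_def]; linarith
  have hmδ : m ≤ δ / 8 := by
    have := min_le_right (min 1 c) δ
    rw [hm_def]; linarith
  refine ⟨ε * m / 4, by positivity, by nlinarith, ?_⟩
  intro x hx r hr hr1
  set ρ : ℝ := m * r with hρ_def
  have hρ0 : 0 < ρ := by positivity
  have hρm : ρ ≤ m := by nlinarith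
  obtain ⟨x₀, hx₀S, hxx₀⟩ := Metric.mem_closure_iff.mp hx ρ hρ0
  obtain ⟨hx₀N, hx₀O⟩ := hx₀S
  obtain ⟨n, hnN, hx₀n⟩ := hx₀N
  have hnF : n ∈ frontier O := hN hnN
  have hnO : n ∉ O := by
    intro hmem
    exact hnF.2 (by rwa [hO.interior_eq])
  have hx₀Nδ : x₀ ∈ Nbhd N δ := ⟨n, hnN, by linarith⟩
  set C := connectedComponentIn O x₀ with hC
  have hx₀C : x₀ ∈ C := mem_connectedComponentIn hx₀O
  have hCsub : C ⊆ O := connectedComponentIn_subset O x₀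
  -- every point of O close to n lies in C
  have hmemC : ∀ p ∈ O, dist p n < δ / 2 → p ∈ C := by
    intro p hpO hpn
    by_cases hpx : p = x₀
    · rw [hpx]; exact hx₀C
    have hpNδ : p ∈ Nbhd N δ := ⟨n, hnN, by linarith⟩
    have hd : dist x₀ p < δ := by
      calc dist x₀ p ≤ dist x₀ n + dist n p := dist_triangle _ _ _
        _ < δ := by rw [dist_comm n p]; linarith
    obtain ⟨γ, hγc, hγ0, hγ1, hγO, -, -⟩ :=
      hcurve x₀ ⟨hx₀O, hx₀Nδ⟩ p ⟨hpO, hpNδ⟩ (Ne.symm hpx) hd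
    have himg : IsPreconnected (γ '' Icc 0 1) := isPreconnected_Icc.image γ hγc
    have hsubC : γ '' Icc 0 1 ⊆ C :=
      himg.subset_connectedComponentIn ⟨0, ⟨le_refl 0, zero_le_one⟩, hγ0⟩ hγO.image_subset
    exact hsubC ⟨1, ⟨zero_le_one, le_refl 1⟩, hγ1⟩
  have hnC : n ∈ closure C := by
    rw [Metric.mem_closure_iff]
    intro η hη
    have hncl : n ∈ closure O := frontier_subset_closure hnF
    obtain ⟨p, hpO, hnp⟩ :=
      Metric.mem_closure_iff.mp hncl (min η (δ / 2)) (lt_min hη (by linarith))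
    exact ⟨p, hmemC p hpO (by rw [dist_comm]; exact lt_of_lt_of_le hnp (min_le_right _ _)),
      lt_of_lt_of_le hnp (min_le_left _ _)⟩
  have hnfr : n ∈ frontier C := by
    refine ⟨hnC, ?_⟩
    rw [(hO.connectedComponentIn).interior_eq]
    exact fun hmem => hnO (hCsub hmem)
  have hdiamC : ENNReal.ofReal c ≤ EMetric.diam C := hdiam x₀ hx₀O ⟨n, hnfr, hnN⟩
  -- a far point in C
  have hfar : ∃ y' ∈ C, c / 4 ≤ dist x₀ y' := by
    by_contra hcon
    push_neg at hcon
    have hb : EMetric.diam C ≤ ENNReal.ofReal (c / 2) := by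
      apply EMetric.diam_le
      intro u hu v hv
      calc edist u v ≤ edist u x₀ + edist x₀ v := edist_triangle _ _ _
        _ ≤ ENNReal.ofReal (c / 4) + ENNReal.ofReal (c / 4) := by
            rw [edist_dist, edist_dist]
            exact add_le_add
              (ENNReal.ofReal_le_ofReal (by rw [dist_comm]; exact (hcon u hu).le))
              (ENNReal.ofReal_le_ofReal (hcon v hv).le)
        _ = ENNReal.ofReal (c / 2) := by
            rw [← ENNReal.ofReal_add (by linarith) (by linarith)]
            congr 1; ring
    have hle := le_trans hdiamC hb
    rw [ENNReal.ofReal_le_ofReal_iff (by linarith)] at hle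
    linarith
  obtain ⟨y', hy'C, hy'⟩ := hfar
  -- intermediate value: a point y in C at distance exactly ρ from x₀
  have hcontd : ContinuousOn (fun p => dist x₀ p) C :=
    (Continuous.dist continuous_const continuous_id).continuousOn
  have hivt := (isPreconnected_connectedComponentIn (F := O) (x := x₀)).intermediate_value
    hx₀C hy'C hcontd
  have hρmem : ρ ∈ Icc (dist x₀ x₀) (dist x₀ y') := by
    rw [dist_self]
    exact ⟨hρ0.le, by linarith⟩
  obtain ⟨y, hyC, hyρ0⟩ := hivt hρmem
  have hyρ : dist x₀ y = ρ := hyρ0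
  have hyO : y ∈ O := hCsub hyC
  have hyN : y ∈ Nbhd N δ := by
    refine ⟨n, hnN, ?_⟩
    calc dist y n ≤ dist y x₀ + dist x₀ n := dist_triangle _ _ _
      _ < ρ + δ / 2 := by rw [dist_comm]; rw [hyρ]; linarith
      _ ≤ δ := by linarith
  have hxy_ne : x₀ ≠ y := by
    intro he; rw [← he, dist_self] at hyρ; linarith
  have hxyδ : dist x₀ y < δ := by rw [hyρ]; linarith
  obtain ⟨γ, hγc, hγ0, hγ1, hγO, hγlen, hγcig⟩ :=
    hcurve x₀ ⟨hx₀O, hx₀Nδ⟩ y ⟨hyO, hyN⟩ hxy_ne hxyδ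
  -- intermediate value along the curve
  have hg : ContinuousOn (fun s => dist x₀ (γ s)) (Icc (0:ℝ) 1) :=
    (Continuous.dist continuous_const continuous_id).comp_continuousOn hγc
  have hmem2 : ρ / 2 ∈ Icc (dist x₀ (γ 0)) (dist x₀ (γ 1)) := by
    rw [hγ0, hγ1, dist_self, hyρ]
    exact ⟨by linarith, by linarith⟩
  obtain ⟨t, ht, hzt0⟩ := intermediate_value_Icc zero_le_one hg hmem2
  have hzt : dist x₀ (γ t) = ρ / 2 := hzt0
  set z := γ t with hz_def
  have hzO : z ∈ O := hγO ht
  have hdzx : dist z x₀ = ρ / 2 := by rw [dist_comm]; exact hzt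
  have hzy : ρ / 2 ≤ dist z y := by
    have htr : dist x₀ y ≤ dist x₀ z + dist z y := dist_triangle _ _ _
    rw [hyρ, dist_comm x₀ z, hdzx] at htr
    linarith
  -- cigar lower bound on distance to boundary points in N_δ
  have hcig : ∀ w ∈ frontier O ∩ Nbhd N δ, ε * ρ / 4 ≤ dist z w := by
    intro w hw
    have h1 := hγcig t ht w hw
    rw [← hz_def, hyρ, hdzx] at h1
    have h2 : ε * (ρ / 2) * dist z y / ρ = ε * dist z y / 2 := by
      field_simp
    rw [h2] at h1
    nlinarith
  have hκρ : ε * m / 4 * r = ε * ρ / 4 := by rw [hρ_def]; ring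
  have hball : Metric.ball z (ε * m / 4 * r) ⊆ O := by
    rw [hκρ]
    refine subset_of_preconnected_of_disjoint_frontier
      (convex_ball z (ε * ρ / 4)).isPreconnected hO ?_
      (Metric.mem_ball_self (by positivity)) hzO
    rw [eq_empty_iff_forall_notMem]
    rintro w ⟨hwb, hwf⟩
    have hwz : dist w z < ε * ρ / 4 := mem_ball.mp hwb
    have hwN : w ∈ Nbhd N δ := by
      refine ⟨n, hnN, ?_⟩
      calc dist w n ≤ dist w z + dist z x₀ + dist x₀ n := dist_triangle4 _ _ _ _
        _ < ε * ρ / 4 + ρ / 2 + δ / 2 := by rw [hdzx]; linarith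
        _ ≤ δ := by nlinarith
    have := hcig w ⟨hwf, hwN⟩
    rw [dist_comm] at hwz
    linarith
  have hρr : ρ ≤ r / 8 := by
    have h8 : m * r ≤ (1 / 8) * r := mul_le_mul_of_nonneg_right hm1 hr.le
    rw [hρ_def]; linarith
  have hκr : ε * m / 4 * r ≤ m * r / 4 := by
    have h9 : ε * (m * r) ≤ 1 * (m * r) :=
      mul_le_mul_of_nonneg_right hε1 (by positivity)
    linarith
  refine ⟨z, ?_, fun q hq => ⟨hball hq, ?_⟩⟩
  · rw [mem_ball, dist_comm]
    calc dist x z ≤ dist x x₀ + dist x₀ z := dist_triangle _ _ _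
      _ < ρ + ρ / 2 := by rw [dist_comm x₀ z, hdzx]; linarith
      _ ≤ r := by linarith
  · rw [mem_ball]
    have hqz : dist q z < ε * m / 4 * r := mem_ball.mp hq
    have hxz : dist z x < ρ + ρ / 2 := by
      rw [dist_comm]
      calc dist x z ≤ dist x x₀ + dist x₀ z := dist_triangle _ _ _
        _ < ρ + ρ / 2 := by rw [dist_comm x₀ z, hdzx]; linarith
    calc dist q x ≤ dist q z + dist z x := dist_triangle _ _ _
      _ < ε * m / 4 * r + (ρ + ρ / 2) := by linarith
      _ ≤ m * r / 4 + (ρ + ρ / 2) := by linarith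
      _ ≤ r := by rw [hρ_def] at hρr ⊢; linarith
end

section
/- Under the assumptions that D ⊆ ∂O is closed and Ahlfors–David regular and that O is locally uniform near ∂O \ D, the full boundary ∂O is porous. -/
open MeasureTheory Metric Set

set_option maxHeartbeats 1000000

lemma frontier_ccIn_subset {X : Type*} [TopologicalSpace X] [LocallyConnectedSpace X]
    {O : Set X} (hO : IsOpen O) (a : X) :
    frontier (connectedComponentIn O a) ⊆ frontier O := by
  intro w hw
  have hUopen : IsOpen (connectedComponentIn O a) := hO.connectedComponentIn
  have hwO : w ∉ O := by
    intro hwO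
    have h1 : w ∈ closure (connectedComponentIn O a) := hw.1
    have h2 : w ∉ connectedComponentIn O a := fun h => hw.2 (by rwa [hUopen.interior_eq])
    have hV : connectedComponentIn O w ∈ nhds w := connectedComponentIn_mem_nhds (hO.mem_nhds hwO)
    obtain ⟨y, hy1, hy2⟩ := (mem_closure_iff_nhds.mp h1 _ hV)
    have : connectedComponentIn O w = connectedComponentIn O a :=
      (connectedComponentIn_eq hy1).trans (connectedComponentIn_eq hy2).symm
    exact h2 (this ▸ mem_connectedComponentIn hwO)
  constructor
  · exact closure_mono (connectedComponentIn_subset O a) hw.1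
  · rw [hO.interior_eq]; exact hwO

lemma corkscrew {d : ℕ} (hd : 2 ≤ d) (O D : Set (EuclideanSpace ℝ (Fin d)))
    (hO : IsOpen O) (ε δ c' : ℝ) (hε : 0 < ε) (hε1 : ε ≤ 1) (hδ : 0 < δ) (hc' : 0 < c')
    (hloc1 : ∀ x ∈ O ∩ Nbhd (frontier O \ D) δ, ∀ y ∈ O ∩ Nbhd (frontier O \ D) δ,
      x ≠ y → dist x y < δ →
      ∃ γ : ℝ → EuclideanSpace ℝ (Fin d),
        ContinuousOn γ (Set.Icc 0 1) ∧ γ 0 = x ∧ γ 1 = y ∧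
        Set.MapsTo γ (Set.Icc 0 1) O ∧
        eVariationOn γ (Set.Icc 0 1) ≤ ENNReal.ofReal (ε⁻¹ * dist x y) ∧
        ∀ s ∈ Set.Icc (0:ℝ) 1, ∀ w ∈ frontier O ∩ Nbhd (frontier O \ D) δ,
          ε * dist (γ s) x * dist (γ s) y / dist x y ≤ dist (γ s) w)
    (hloc2 : ∀ x ∈ O, (frontier (connectedComponentIn O x) ∩ (frontier O \ D)).Nonempty →
      ENNReal.ofReal c' ≤ EMetric.diam (connectedComponentIn O x)) :
    ∃ κ : ℝ, 0 < κ ∧ κ ≤ 1 ∧ ∀ x ∈ frontier O, ∀ r : ℝ, 0 < r → r ≤ 1 →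
      (∀ w ∈ frontier O, w ∈ Metric.ball x r → w ∉ D) →
      ∃ z ∈ Metric.ball x r, Metric.ball z (κ * r) ⊆ Metric.ball x r \ frontier O := by
  set m : ℝ := min 1 (min δ (4 * c')) with hm_def
  have hm : 0 < m := by positivity
  have hm1 : m ≤ 1 := min_le_left _ _
  refine ⟨ε ^ 2 * m / 128, by positivity, ?_, ?_⟩
  · nlinarith [sq_nonneg ε, hm.le]
  intro x hx r hr hr1 hDfree
  set t : ℝ := m * r with ht_def
  have ht : 0 < t := by positivity
  have htr : t ≤ r := by nlinarith
  have htδ : t ≤ δ := by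
    have : m ≤ δ := le_trans (min_le_right _ _) (min_le_left _ _)
    nlinarith
  have htc' : t ≤ 4 * c' := by
    have : m ≤ 4 * c' := le_trans (min_le_right _ _) (min_le_right _ _)
    nlinarith
  have xN : x ∈ frontier O \ D := ⟨hx, hDfree x hx (mem_ball_self hr)⟩
  -- a point of O close to x
  have hxcl : x ∈ closure O := frontier_subset_closure hx
  obtain ⟨a, haO, hax⟩ := Metric.mem_closure_iff.mp hxcl (t / 8) (by positivity)
  -- hax : dist x a < t/8
  set U := connectedComponentIn O a with hU_def
  have haU : a ∈ U := mem_connectedComponentIn haO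
  have hUO : U ⊆ O := connectedComponentIn_subset O a
  have hfr : frontier U ⊆ frontier O := frontier_ccIn_subset hO a
  -- diameter lower bound
  have hdiam : ENNReal.ofReal (t / 4) ≤ EMetric.diam U := by
    by_contra h
    push_neg at h
    have hsub : U ⊆ ball x (t / 2) := by
      intro u hu
      have h1 : edist u a ≤ EMetric.diam U := EMetric.edist_le_diam_of_mem hu haU
      have h2 : dist u a < t / 4 := by
        have h3 := lt_of_le_of_lt h1 h
        rw [edist_dist] at h3
        exact (ENNReal.ofReal_lt_ofReal_iff (by positivity)).mp h3
      have : dist u x ≤ dist u a + dist a x := dist_triangle u a x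
      rw [mem_ball]
      rw [dist_comm] at hax
      linarith
    have hfrsub : frontier U ⊆ ball x t := by
      intro w hw
      have h1 : w ∈ closure (ball x (t / 2)) := closure_mono hsub hw.1
      have h2 : w ∈ closedBall x (t / 2) := closure_ball_subset_closedBall h1
      rw [mem_ball]
      rw [mem_closedBall] at h2
      linarith
    have hfrN : frontier U ⊆ frontier O \ D := fun w hw =>
      ⟨hfr hw, hDfree w (hfr hw) (ball_subset_ball htr (hfrsub hw))⟩
    have hne : (frontier U ∩ (frontier O \ D)).Nonempty := by
      rcases eq_empty_or_nonempty (frontier U) with hemp | ⟨w, hw⟩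
      · exfalso
        rcases frontier_eq_empty_iff.mp hemp with h0 | huniv
        · exact absurd haU (h0 ▸ notMem_empty a)
        · have hw : (x + EuclideanSpace.single (⟨0, by omega⟩ : Fin d) t) ∈ ball x (t / 2) :=
            hsub (huniv ▸ mem_univ _)
          rw [mem_ball, dist_self_add_left, EuclideanSpace.norm_single, Real.norm_eq_abs,
            abs_of_pos ht] at hw
          linarith
      · exact ⟨w, hw, hfrN hw⟩
    have h4 := hloc2 a haO hne
    have h5 : ENNReal.ofReal (t / 4) ≤ ENNReal.ofReal c' :=
      ENNReal.ofReal_le_ofReal (by linarith)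
    exact absurd (le_trans h5 h4) (not_le.mpr h)
  -- obtain a far point b in U
  obtain ⟨b, hbU, hab⟩ : ∃ b ∈ U, t / 16 ≤ dist a b := by
    have hnle : ¬ (EMetric.diam U ≤ ENNReal.ofReal (t / 8)) := by
      intro hle
      have hcon : ENNReal.ofReal (t / 8) < ENNReal.ofReal (t / 4) :=
        (ENNReal.ofReal_lt_ofReal_iff (by positivity)).mpr (by linarith)
      exact lt_irrefl _ (lt_of_le_of_lt (hdiam.trans hle) hcon)
    rw [EMetric.diam, Metric.ediam_le_iff] at hnle
    push_neg at hnle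
    obtain ⟨u, hu, v, hv, huv⟩ := hnle
    have hduv : t / 8 < dist u v := by
      rw [edist_dist] at huv
      exact (ENNReal.ofReal_lt_ofReal_iff_of_nonneg (by positivity)).mp huv
    have htri : dist u v ≤ dist u a + dist a v := dist_triangle u a v
    by_cases hcase : t / 16 ≤ dist a u
    · exact ⟨u, hu, hcase⟩
    · refine ⟨v, hv, ?_⟩
      rw [dist_comm] at hcase
      push_neg at hcase
      linarith
  -- intermediate point y₁ with dist a y₁ = L
  set L : ℝ := ε * t / 32 with hL_def
  have hL : 0 < L := by positivity
  have hLt : L ≤ t / 32 := by nlinarith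
  obtain ⟨y₁, hy₁U, hy₁d⟩ : ∃ y₁ ∈ U, dist a y₁ = L := by
    have hconn : IsPreconnected U := isPreconnected_connectedComponentIn
    have himg : IsPreconnected ((fun u => dist a u) '' U) :=
      hconn.image _ (Continuous.continuousOn (by fun_prop))
    have hoc := himg.ordConnected
    have h0 : (0 : ℝ) ∈ (fun u => dist a u) '' U := ⟨a, haU, dist_self a⟩
    have hb' : dist a b ∈ (fun u => dist a u) '' U := ⟨b, hbU, rfl⟩
    have : L ∈ (fun u => dist a u) '' U :=
      hoc.out h0 hb' ⟨hL.le, by linarith⟩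
    exact this
  -- memberships for the curve condition
  have haxd : dist a x < t / 8 := by rw [dist_comm] at hax; exact hax
  have haNb : a ∈ O ∩ Nbhd (frontier O \ D) δ :=
    ⟨haO, ⟨x, xN, by linarith⟩⟩
  have hy₁x : dist y₁ x < t := by
    have h1 : dist y₁ x ≤ dist y₁ a + dist a x := dist_triangle y₁ a x
    rw [dist_comm] at hy₁d
    linarith
  have hy₁Nb : y₁ ∈ O ∩ Nbhd (frontier O \ D) δ :=
    ⟨hUO hy₁U, ⟨x, xN, by linarith⟩⟩
  have hne' : a ≠ y₁ := by
    intro h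
    rw [h, dist_self] at hy₁d
    linarith
  obtain ⟨γ, hγc, hγ0, hγ1, hγmaps, hγvar, hγcig⟩ :=
    hloc1 a haNb y₁ hy₁Nb hne' (by rw [hy₁d]; linarith)
  -- find the midpoint time
  have hgc : ContinuousOn (fun s => dist (γ s) a - dist (γ s) y₁) (Icc (0:ℝ) 1) := by
    have h1 : ContinuousOn (fun s => dist (γ s) a) (Icc (0:ℝ) 1) :=
      continuous_dist.comp_continuousOn (f := fun s => (γ s, a)) (hγc.prodMk continuousOn_const)
    have h2 : ContinuousOn (fun s => dist (γ s) y₁) (Icc (0:ℝ) 1) :=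
      continuous_dist.comp_continuousOn (f := fun s => (γ s, y₁)) (hγc.prodMk continuousOn_const)
    exact h1.sub h2
  have hmid : (0:ℝ) ∈ (fun s => dist (γ s) a - dist (γ s) y₁) '' Icc 0 1 := by
    apply intermediate_value_Icc zero_le_one hgc
    constructor
    · simp only [hγ0, dist_self, zero_sub, hy₁d]
      linarith
    · simp only [hγ1, dist_self, sub_zero, dist_comm y₁ a, hy₁d]
      linarith
  obtain ⟨s₀, hs₀, hgs₀⟩ := hmid
  set z := γ s₀ with hz_def
  have hzO : z ∈ O := hγmaps hs₀
  have hρeq : dist z a = dist z y₁ := by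
    have : dist z a - dist z y₁ = 0 := hgs₀
    linarith
  have hρ : L / 2 ≤ dist z a := by
    have h1 : dist a y₁ ≤ dist a z + dist z y₁ := dist_triangle a z y₁
    rw [dist_comm a z] at h1
    rw [hy₁d] at h1
    linarith [hρeq]
  have hza : dist z a ≤ t / 32 := by
    have h1 : edist (γ s₀) (γ 0) ≤ eVariationOn γ (Icc 0 1) :=
      eVariationOn.edist_le γ hs₀ (Set.mem_Icc.mpr ⟨le_refl 0, zero_le_one⟩)
    have h2 : edist (γ s₀) (γ 0) ≤ ENNReal.ofReal (ε⁻¹ * dist a y₁) := h1.trans hγvar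
    rw [hγ0, hy₁d] at h2
    have h3 : ε⁻¹ * L = t / 32 := by
      rw [hL_def]; field_simp
    rw [h3] at h2
    exact (edist_le_ofReal (by positivity)).mp h2
  have hzx : dist z x < t / 4 := by
    have h1 : dist z x ≤ dist z a + dist a x := dist_triangle z a x
    linarith
  -- the hole
  refine ⟨z, ?_, ?_⟩
  · rw [mem_ball]; linarith
  intro w hw
  rw [mem_ball] at hw
  have hκt : ε ^ 2 * m / 128 * r = ε ^ 2 * t / 128 := by rw [ht_def]; ring
  rw [hκt] at hw
  have hwx : dist w x < t := by
    have h1 : dist w x ≤ dist w z + dist z x := dist_triangle w z x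
    nlinarith [sq_nonneg ε]
  refine ⟨by rw [mem_ball]; linarith, ?_⟩
  intro hwfr
  have hwD : w ∉ D := hDfree w hwfr (by rw [mem_ball]; linarith)
  have hwNb : w ∈ frontier O ∩ Nbhd (frontier O \ D) δ :=
    ⟨hwfr, ⟨w, ⟨hwfr, hwD⟩, by rw [dist_self]; exact hδ⟩⟩
  have hcig := hγcig s₀ hs₀ w hwNb
  rw [hy₁d, ← hz_def] at hcig
  have hlb : ε ^ 2 * t / 128 ≤ ε * dist z a * dist z y₁ / L := by
    have h1 : ε * (L / 2) * (L / 2) / L ≤ ε * dist z a * dist z y₁ / L := by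
      gcongr <;> first
        | exact hρ
        | (rw [← hρeq]; exact hρ)
    have h2 : ε * (L / 2) * (L / 2) / L = ε ^ 2 * t / 128 := by
      rw [hL_def]; field_simp; ring
    linarith
  have : ε ^ 2 * t / 128 ≤ dist z w := le_trans hlb hcig
  rw [dist_comm] at hw
  linarith

lemma adr_hole {d : ℕ} (hd : 2 ≤ d) (D : Set (EuclideanSpace ℝ (Fin d)))
    (hDclosed : IsClosed D) (c C : ℝ) (hc : 0 < c) (hcC : c ≤ C)
    (hADR : ∀ x ∈ D, ∀ r : ℝ, 0 < r → ENNReal.ofReal r < EMetric.diam D →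
      ENNReal.ofReal (c * r ^ (d - 1)) ≤ μH[((d : ℝ) - 1)] (D ∩ Metric.ball x r) ∧
      μH[((d : ℝ) - 1)] (D ∩ Metric.ball x r) ≤ ENNReal.ofReal (C * r ^ (d - 1))) :
    ∃ κ : ℝ, 0 < κ ∧ κ ≤ 1 ∧ ∀ p ∈ D, ∀ r : ℝ, 0 < r →
      ∃ z ∈ Metric.ball p r, Metric.ball z (κ * r) ⊆ Metric.ball p r \ D := by
  have hC : 0 < C := lt_of_lt_of_le hc hcC
  set κ : ℝ := min (1/64) (c / (C * 16 ^ (d + 1) * 32)) with hκ_def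
  have hκpos : 0 < κ := by
    apply lt_min (by norm_num)
    positivity
  have hκ64 : κ ≤ 1/64 := min_le_left _ _
  refine ⟨κ, hκpos, by linarith, ?_⟩
  intro p hp r hr
  by_cases hsmall : EMetric.diam D ≤ ENNReal.ofReal (r / 8)
  · -- small diameter case
    set z := p + EuclideanSpace.single (⟨0, by omega⟩ : Fin d) (r / 8 + 2 * (κ * r)) with hz_def
    have hzp : dist z p = r / 8 + 2 * (κ * r) := by
      rw [hz_def, dist_self_add_left, EuclideanSpace.norm_single, Real.norm_eq_abs,
        abs_of_pos (by positivity)]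
    refine ⟨z, ?_, ?_⟩
    · rw [mem_ball, hzp]; nlinarith
    · intro y hy
      rw [mem_ball] at hy
      have htri : dist z p ≤ dist z y + dist y p := dist_triangle z y p
      rw [dist_comm z y] at htri
      constructor
      · rw [mem_ball]
        have : dist y p ≤ dist y z + dist z p := dist_triangle y z p
        rw [hzp] at this; nlinarith
      · intro hyD
        have h1 : edist y p ≤ EMetric.diam D := EMetric.edist_le_diam_of_mem hyD hp
        have h2 : dist y p ≤ r / 8 := by
          have := h1.trans hsmall
          rw [edist_dist] at this
          exact (ENNReal.ofReal_le_ofReal_iff (by positivity)).mp this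
        rw [hzp] at htri
        nlinarith
  · -- main case
    push_neg at hsmall
    by_contra hcon
    push_neg at hcon
    set s : ℝ := κ * r with hs_def
    have hs : 0 < s := by positivity
    have hsr : s ≤ r / 64 := by nlinarith
    set R : ℝ := r / 16 with hR_def
    have hR : 0 < R := by positivity
    have hsR : s ≤ R / 2 := by rw [hR_def]; nlinarith
    -- density of D at scale s
    have hdense : ∀ z ∈ closedBall p (R / 2), ∃ q ∈ D ∩ ball p R, dist z q < s := by
      intro z hz
      rw [mem_closedBall] at hz
      have hzball : z ∈ ball p r := by rw [mem_ball]; rw [hR_def] at hz; linarith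
      have := hcon z hzball
      rw [Set.not_subset] at this
      obtain ⟨y, hy1, hy2⟩ := this
      rw [mem_ball] at hy1
      have hyp : dist y p ≤ dist y z + dist z p := dist_triangle y z p
      have hyball : y ∈ ball p r := by
        rw [mem_ball]; rw [hR_def] at hz; nlinarith
      have hyD : y ∈ D := by
        by_contra hyD
        exact hy2 ⟨hyball, hyD⟩
      refine ⟨y, ⟨hyD, ?_⟩, by rw [dist_comm]; exact hy1⟩
      rw [mem_ball]
      rw [hR_def] at hz ⊢
      nlinarith
    -- maximal 3s-separated subset of D ∩ ball p R
    set A : Set (EuclideanSpace ℝ (Fin d)) := D ∩ ball p R with hA_def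
    set S : Set (Set (EuclideanSpace ℝ (Fin d))) :=
      {F | F ⊆ A ∧ F.Pairwise fun u v => 3 * s ≤ dist u v} with hS_def
    obtain ⟨F, -, hFmax⟩ : ∃ F, ∅ ⊆ F ∧ Maximal (· ∈ S) F := by
      apply zorn_subset_nonempty
      · intro ch hch hchain hchne
        refine ⟨⋃₀ ch, ⟨?_, ?_⟩, fun t ht => subset_sUnion_of_mem ht⟩
        · exact sUnion_subset fun t ht => (hch ht).1
        · intro u hu v hv huv
          obtain ⟨tu, htu, hu'⟩ := hu
          obtain ⟨tv, htv, hv'⟩ := hv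
          rcases hchain.total htu htv with h | h
          · exact (hch htv).2 (h hu') hv' huv
          · exact (hch htu).2 hu' (h hv') huv
      · exact ⟨empty_subset A, pairwise_empty _⟩
    obtain ⟨hFA, hFsep⟩ := hFmax.prop
    -- F is finite
    have hFfin : F.Finite := by
      obtain ⟨T, hTfin, hTcov⟩ := (totallyBounded_iff.mp
        ((isCompact_closedBall p R).totallyBounded)) s hs
      have hsub : F ⊆ ⋃ y ∈ T, (F ∩ ball y s) := by
        intro f hf
        have : f ∈ closedBall p R := ball_subset_closedBall (hFA hf).2
        obtain ⟨y, hy, hfy⟩ := mem_iUnion₂.mp (hTcov this)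
        exact mem_iUnion₂.mpr ⟨y, hy, hf, hfy⟩
      refine Set.Finite.subset (hTfin.biUnion fun y _ => ?_) hsub
      apply Set.Subsingleton.finite
      intro u hu v hv
      by_contra huv
      have h1 : 3 * s ≤ dist u v := hFsep hu.1 hv.1 huv
      have h2 : dist u v ≤ dist u y + dist y v := dist_triangle u y v
      have h3 : dist u y < s := mem_ball.mp hu.2
      have h4 : dist y v < s := by rw [dist_comm]; exact mem_ball.mp hv.2
      linarith
    obtain ⟨Fs, hmemFs⟩ : ∃ Fs : Finset (EuclideanSpace ℝ (Fin d)), ∀ f, f ∈ Fs ↔ f ∈ F :=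
      ⟨hFfin.toFinset, fun f => hFfin.mem_toFinset⟩
    -- covering of closedBall p (R/2) by balls of radius 4s around F
    have hcover : closedBall p (R / 2) ⊆ ⋃ f ∈ Fs, ball f (4 * s) := by
      intro z hz
      obtain ⟨q, hqA, hzq⟩ := hdense z hz
      have hq3 : ∃ f ∈ F, dist q f < 3 * s := by
        by_cases hqF : q ∈ F
        · exact ⟨q, hqF, by rw [dist_self]; linarith⟩
        · by_contra hq
          push_neg at hq
          have hins : insert q F ∈ S := by
            constructor
            · exact insert_subset hqA hFA
            · rw [pairwise_insert]
              refine ⟨hFsep, fun b hb hqb => ⟨hq b hb, ?_⟩⟩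
              rw [dist_comm]; exact hq b hb
          exact hqF (hFmax.2 hins (subset_insert q F) (mem_insert q F))
      obtain ⟨f, hfF, hqf⟩ := hq3
      refine mem_iUnion₂.mpr ⟨f, (hmemFs f).mpr hfF, ?_⟩
      rw [mem_ball]
      have := dist_triangle z q f
      linarith
    -- instances and volume facts
    haveI : Nonempty (Fin d) := ⟨⟨0, by omega⟩⟩
    set v : ENNReal := volume (ball (0 : EuclideanSpace ℝ (Fin d)) 1) with hv_def
    have hv0 : v ≠ 0 := (measure_ball_pos volume 0 one_pos).ne'
    have hvtop : v ≠ ⊤ := measure_ball_lt_top.ne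
    have hrank : Module.finrank ℝ (EuclideanSpace ℝ (Fin d)) = d := finrank_euclideanSpace_fin
    obtain ⟨n, hn_def⟩ : ∃ n : ℕ, n = Fs.card := ⟨Fs.card, rfl⟩
    -- volume lower bound on the covering
    have hvol1 : ENNReal.ofReal ((R / 2) ^ d) * v ≤ (n : ENNReal) * (ENNReal.ofReal ((4 * s) ^ d) * v) := by
      have h1 : volume (closedBall p (R / 2)) = ENNReal.ofReal ((R / 2) ^ d) * v := by
        rw [Measure.addHaar_closedBall volume p (by positivity : (0:ℝ) ≤ R / 2), hrank]
      have h2 : volume (closedBall p (R / 2)) ≤ ∑ f ∈ Fs, volume (ball f (4 * s)) :=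
        le_trans (measure_mono hcover) (measure_biUnion_finset_le Fs _)
      have h3 : ∀ f ∈ Fs, volume (ball f (4 * s)) = ENNReal.ofReal ((4 * s) ^ d) * v := by
        intro f _
        rw [Measure.addHaar_ball volume f (by positivity : (0:ℝ) ≤ 4 * s), hrank]
      rw [Finset.sum_congr rfl h3, Finset.sum_const, nsmul_eq_mul, ← hn_def] at h2
      rw [← h1]
      rw [mul_comm ((n:ENNReal)) _, mul_assoc] at h2 ⊢
      exact h2
    have hvol2 : (R / 2) ^ d ≤ (n : ℝ) * (4 * s) ^ d := by
      have h4 : ENNReal.ofReal ((R / 2) ^ d) ≤ (n : ENNReal) * ENNReal.ofReal ((4 * s) ^ d) := by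
        have h4' : ENNReal.ofReal ((R / 2) ^ d) * v ≤
            ((n : ENNReal) * ENNReal.ofReal ((4 * s) ^ d)) * v := by
          rw [mul_assoc]; exact hvol1
        exact (ENNReal.mul_le_mul_iff_left hv0 hvtop).mp h4'
      rw [← ENNReal.ofReal_natCast n, ← ENNReal.ofReal_mul (by positivity)] at h4
      exact (ENNReal.ofReal_le_ofReal_iff (by positivity)).mp h4
    -- Hausdorff measure bound
    have hhaus : (n : ℝ) * (c * s ^ (d - 1)) ≤ C * (2 * R) ^ (d - 1) := by
      have hdisj : (↑Fs : Set (EuclideanSpace ℝ (Fin d))).PairwiseDisjoint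
          (fun f => D ∩ ball f s) := by
        intro u hu w hw huw
        have hsep : 3 * s ≤ dist u w := hFsep ((hmemFs u).mp hu) ((hmemFs w).mp hw) huw
        exact Disjoint.mono inter_subset_right inter_subset_right
          (ball_disjoint_ball (by linarith))
      have hmeas : ∀ f ∈ Fs, MeasurableSet (D ∩ ball f s) := fun f _ =>
        hDclosed.measurableSet.inter measurableSet_ball
      have hsum : ∑ f ∈ Fs, μH[((d : ℝ) - 1)] (D ∩ ball f s)
          = μH[((d : ℝ) - 1)] (⋃ f ∈ Fs, D ∩ ball f s) :=
        (measure_biUnion_finset hdisj hmeas).symm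
      have hsub2 : (⋃ f ∈ Fs, D ∩ ball f s) ⊆ D ∩ ball p (2 * R) := by
        intro y hy
        obtain ⟨f, hf, hyD, hyf⟩ := mem_iUnion₂.mp hy
        have hfA : f ∈ A := hFA ((hmemFs f).mp hf)
        have h5 : dist f p < R := mem_ball.mp hfA.2
        have h6 : dist y f < s := mem_ball.mp hyf
        refine ⟨hyD, mem_ball.mpr ?_⟩
        have := dist_triangle y f p
        linarith
      have hupper : μH[((d : ℝ) - 1)] (D ∩ ball p (2 * R)) ≤
          ENNReal.ofReal (C * (2 * R) ^ (d - 1)) := by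
        refine (hADR p hp (2 * R) (by positivity) ?_).2
        have : 2 * R = r / 8 := by rw [hR_def]; ring
        rw [this]
        exact hsmall
      have hlower : ∀ f ∈ Fs, ENNReal.ofReal (c * s ^ (d - 1)) ≤
          μH[((d : ℝ) - 1)] (D ∩ ball f s) := by
        intro f hf
        have hfA : f ∈ A := hFA ((hmemFs f).mp hf)
        refine (hADR f hfA.1 s hs ?_).1
        refine lt_of_le_of_lt (ENNReal.ofReal_le_ofReal (by linarith : s ≤ r / 8)) hsmall
      have h7 : (n : ENNReal) * ENNReal.ofReal (c * s ^ (d - 1)) ≤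
          ENNReal.ofReal (C * (2 * R) ^ (d - 1)) := by
        calc (n : ENNReal) * ENNReal.ofReal (c * s ^ (d - 1))
            = ∑ _f ∈ Fs, ENNReal.ofReal (c * s ^ (d - 1)) := by
              rw [Finset.sum_const, nsmul_eq_mul, ← hn_def]
          _ ≤ ∑ f ∈ Fs, μH[((d : ℝ) - 1)] (D ∩ ball f s) := Finset.sum_le_sum hlower
          _ = μH[((d : ℝ) - 1)] (⋃ f ∈ Fs, D ∩ ball f s) := hsum
          _ ≤ μH[((d : ℝ) - 1)] (D ∩ ball p (2 * R)) := measure_mono hsub2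
          _ ≤ ENNReal.ofReal (C * (2 * R) ^ (d - 1)) := hupper
      rw [← ENNReal.ofReal_natCast n, ← ENNReal.ofReal_mul (by positivity)] at h7
      exact (ENNReal.ofReal_le_ofReal_iff (by positivity)).mp h7
    -- algebra to reach a contradiction
    obtain ⟨k, hk⟩ : ∃ k, d = k + 1 := ⟨d - 1, by omega⟩
    have hdk : d - 1 = k := by omega
    rw [hdk] at hhaus
    rw [hk] at hvol2
    have hskpos : (0:ℝ) < s ^ k := pow_pos hs k
    have hRkpos : (0:ℝ) < R ^ k := pow_pos hR k
    have hnneg : (0:ℝ) ≤ (n : ℝ) := Nat.cast_nonneg n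
    have e1 : (R / 2) ^ (k + 1) = R ^ k * R / 2 ^ (k + 1) := by
      rw [div_pow, pow_succ]
    have e2 : (4 * s) ^ (k + 1) = 4 ^ (k + 1) * (s ^ k * s) := by
      rw [mul_pow, pow_succ, pow_succ]
    have e3 : (2 * R) ^ k = 2 ^ k * R ^ k := mul_pow 2 R k
    rw [e1, e2] at hvol2
    rw [e3] at hhaus
    -- multiply hvol2 by (c * s^k) and chain with hhaus
    have h8 : (c * s ^ k) * (R ^ k * R / 2 ^ (k + 1)) ≤
        (C * (2 ^ k * R ^ k)) * (4 ^ (k + 1) * (s ^ k * s)) := by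
      calc (c * s ^ k) * (R ^ k * R / 2 ^ (k + 1))
          ≤ (c * s ^ k) * ((n : ℝ) * (4 ^ (k + 1) * (s ^ k * s))) := by
            apply mul_le_mul_of_nonneg_left hvol2 (by positivity)
        _ = ((n : ℝ) * (c * s ^ k)) * (4 ^ (k + 1) * (s ^ k * s)) := by ring
        _ ≤ (C * (2 ^ k * R ^ k)) * (4 ^ (k + 1) * (s ^ k * s)) := by
            apply mul_le_mul_of_nonneg_right hhaus (by positivity)
    have h9 : c * R / 2 ^ (k + 1) ≤ C * 2 ^ k * 4 ^ (k + 1) * s := by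
      have hpos : (0:ℝ) < s ^ k * R ^ k := by positivity
      have h10 : (c * R / 2 ^ (k + 1)) * (s ^ k * R ^ k) ≤
          (C * 2 ^ k * 4 ^ (k + 1) * s) * (s ^ k * R ^ k) := by
        calc (c * R / 2 ^ (k + 1)) * (s ^ k * R ^ k)
            = (c * s ^ k) * (R ^ k * R / 2 ^ (k + 1)) := by ring
          _ ≤ (C * (2 ^ k * R ^ k)) * (4 ^ (k + 1) * (s ^ k * s)) := h8
          _ = (C * 2 ^ k * 4 ^ (k + 1) * s) * (s ^ k * R ^ k) := by ring
      exact (mul_le_mul_iff_of_pos_right hpos).mp h10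
    have h11 : c * R ≤ C * (2 ^ k * 4 ^ (k + 1) * 2 ^ (k + 1)) * s := by
      have h2pos : (0:ℝ) < 2 ^ (k + 1) := by positivity
      rw [div_le_iff₀ h2pos] at h9
      calc c * R ≤ C * 2 ^ k * 4 ^ (k + 1) * s * 2 ^ (k + 1) := h9
        _ = C * (2 ^ k * 4 ^ (k + 1) * 2 ^ (k + 1)) * s := by ring
    have hexp : (2:ℝ) ^ k * 4 ^ (k + 1) * 2 ^ (k + 1) ≤ 16 ^ (d + 1) := by
      have h4 : (4:ℝ) ^ (k + 1) = 2 ^ (2 * (k + 1)) := by rw [pow_mul]; norm_num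
      have h16 : (16:ℝ) ^ (d + 1) = 2 ^ (4 * (d + 1)) := by rw [pow_mul]; norm_num
      rw [h4, h16, ← pow_add, ← pow_add]
      exact pow_le_pow_right₀ (by norm_num) (by omega)
    have h12 : c * R ≤ C * 16 ^ (d + 1) * s := by
      calc c * R ≤ C * (2 ^ k * 4 ^ (k + 1) * 2 ^ (k + 1)) * s := h11
        _ ≤ C * 16 ^ (d + 1) * s := by
            apply mul_le_mul_of_nonneg_right _ hs.le
            exact mul_le_mul_of_nonneg_left hexp hC.le
    -- contradiction with the choice of κ
    have hκ2 : κ ≤ c / (C * 16 ^ (d + 1) * 32) := min_le_right _ _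
    have h16pos : (0:ℝ) < 16 ^ (d + 1) := by positivity
    have h13 : C * 16 ^ (d + 1) * s ≤ c * r / 32 := by
      have : C * 16 ^ (d + 1) * κ ≤ c / 32 := by
        calc C * 16 ^ (d + 1) * κ ≤ C * 16 ^ (d + 1) * (c / (C * 16 ^ (d + 1) * 32)) := by
              apply mul_le_mul_of_nonneg_left hκ2 (by positivity)
          _ = c / 32 := by field_simp
      calc C * 16 ^ (d + 1) * s = (C * 16 ^ (d + 1) * κ) * r := by rw [hs_def]; ring
        _ ≤ (c / 32) * r := mul_le_mul_of_nonneg_right this hr.le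
        _ = c * r / 32 := by ring
    have h14 : c * R = c * r / 16 := by rw [hR_def]; ring
    nlinarith

/-- If `D ⊆ ∂O` is closed and Ahlfors–David regular and `O` is locally uniform near
`∂O \ D`, then the full boundary `∂O` is porous. -/
theorem frontier_porous {d : ℕ} (hd : 2 ≤ d) (O D : Set (EuclideanSpace ℝ (Fin d)))
    (hO : IsOpen O) (hD : D ⊆ frontier O) (hDclosed : IsClosed D)
    (c C : ℝ) (hc : 0 < c) (hcC : c ≤ C)
    (hADR : ∀ x ∈ D, ∀ r : ℝ, 0 < r → ENNReal.ofReal r < EMetric.diam D →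
      ENNReal.ofReal (c * r ^ (d - 1)) ≤ μH[((d : ℝ) - 1)] (D ∩ Metric.ball x r) ∧
      μH[((d : ℝ) - 1)] (D ∩ Metric.ball x r) ≤ ENNReal.ofReal (C * r ^ (d - 1)))
    (ε δ : ℝ) (hε : 0 < ε) (hε1 : ε ≤ 1) (hδ : 0 < δ)
    (hloc : LocallyEpsDeltaDomain O (frontier O \ D) ε δ) :
    Porous (frontier O) := by
  obtain ⟨c', hc', hloc2⟩ := hloc.2
  obtain ⟨κN, hκN, hκN1, hN⟩ := corkscrew hd O D hO ε δ c' hε hε1 hδ hc' hloc.1 hloc2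
  obtain ⟨κD, hκD, hκD1, hDh⟩ := adr_hole hd D hDclosed c C hc hcC hADR
  refine ⟨min (κN / 4) (min (κD / 8) (κN * κD / 8)), by positivity, ?_, ?_⟩
  · exact le_trans (min_le_left _ _) (by linarith)
  intro x hx r hr hr1
  set κ : ℝ := min (κN / 4) (min (κD / 8) (κN * κD / 8)) with hκ_def
  have hκ1 : κ ≤ κN / 4 := min_le_left _ _
  have hκ2 : κ ≤ κD / 8 := le_trans (min_le_right _ _) (min_le_left _ _)
  have hκ3 : κ ≤ κN * κD / 8 := le_trans (min_le_right _ _) (min_le_right _ _)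
  by_cases hcase : ∃ p ∈ D, p ∈ Metric.ball x (r / 4)
  · obtain ⟨p, hpD, hpx⟩ := hcase
    rw [Metric.mem_ball] at hpx
    obtain ⟨z₁, hz₁, hole₁⟩ := hDh p hpD (r / 4) (by positivity)
    rw [Metric.mem_ball] at hz₁
    by_cases hcase2 : ∃ q ∈ frontier O, q ∈ Metric.ball z₁ (κD * (r / 4) / 2)
    · obtain ⟨q, hqfr, hqz₁⟩ := hcase2
      rw [Metric.mem_ball] at hqz₁
      have hqsub : Metric.ball q (κD * (r / 4) / 2) ⊆ Metric.ball z₁ (κD * (r / 4)) := by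
        intro y hy
        rw [Metric.mem_ball] at hy ⊢
        have := dist_triangle y q z₁
        linarith
      have hDfree : ∀ w ∈ frontier O, w ∈ Metric.ball q (κD * (r / 4) / 2) → w ∉ D :=
        fun w _ hw hwD => (hole₁ (hqsub hw)).2 hwD
      obtain ⟨z, hz, hole⟩ := hN q hqfr (κD * (r / 4) / 2) (by positivity)
        (by nlinarith) hDfree
      rw [Metric.mem_ball] at hz
      have hzx : dist z x < r := by
        have t1 := dist_triangle z q z₁
        have t2 := dist_triangle z z₁ p
        have t3 := dist_triangle z p x
        nlinarith
      refine ⟨z, Metric.mem_ball.mpr hzx, ?_⟩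
      intro y hy
      rw [Metric.mem_ball] at hy
      have hyin : y ∈ Metric.ball q (κD * (r / 4) / 2) \ frontier O := by
        apply hole
        rw [Metric.mem_ball]
        nlinarith
      refine ⟨?_, hyin.2⟩
      rw [Metric.mem_ball]
      have t0 := Metric.mem_ball.mp hyin.1
      have t1 := dist_triangle y q z₁
      have t2 := dist_triangle y z₁ p
      have t3 := dist_triangle y p x
      nlinarith
    · push_neg at hcase2
      have hzx : dist z₁ x < r / 2 := by
        have := dist_triangle z₁ p x
        linarith
      refine ⟨z₁, Metric.mem_ball.mpr (by linarith), ?_⟩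
      intro y hy
      rw [Metric.mem_ball] at hy
      constructor
      · rw [Metric.mem_ball]
        have := dist_triangle y z₁ x
        nlinarith
      · intro hyfr
        exact hcase2 y hyfr (Metric.mem_ball.mpr (by nlinarith))
  · push_neg at hcase
    have hDfree : ∀ w ∈ frontier O, w ∈ Metric.ball x (r / 4) → w ∉ D :=
      fun w _ hw hwD => hcase w hwD hw
    obtain ⟨z, hz, hole⟩ := hN x hx (r / 4) (by positivity) (by linarith) hDfree
    refine ⟨z, Metric.ball_subset_ball (by linarith) hz, ?_⟩
    intro y hy
    rw [Metric.mem_ball] at hy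
    have hyin : y ∈ Metric.ball x (r / 4) \ frontier O := by
      apply hole
      rw [Metric.mem_ball]
      nlinarith
    exact ⟨Metric.ball_subset_ball (by linarith) hyin.1, hyin.2⟩
end

section
/- Let H be a Hilbert space decomposed as an ℓ²-direct sum H ≅ ⊕ᵢ Hᵢ via a topological isomorphism S : u ↦ (Qᵢu)ᵢ, where (Qᵢ) is a family of pairwise orthogonal projections. Let T be a closed densely defined operator in H commuting with each Qᵢ (Qᵢ T ⊆ T Qᵢ), and let Tᵢ be the part of T in Hᵢ = Qᵢ H. Suppose B is a closed operator in H such that Qᵢ B ⊆ B Qᵢ and B Qᵢ* = Bᵢ for closed operators Bᵢ in Hᵢ. Then B u = S^{-1} (Bᵢ Qᵢ u)ᵢ for u ∈ dom(B), and dom(B) = S^{-1}({(uᵢ)ᵢ ∈ ⊕ᵢ Hᵢ : uᵢ ∈ dom(Bᵢ) for all i and Σᵢ ‖Bᵢuᵢ‖² < ∞}). -/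
open scoped InnerProductSpace

/-- Decomposition of a closed operator along an `ℓ²`-decomposition of a Hilbert space:
let `(Qᵢ)` be pairwise orthogonal projections on `H` decomposing `H` as the `ℓ²`-sum of
the subspaces `Hᵢ = Qᵢ H` via the topological isomorphism `S : u ↦ (Qᵢ u)ᵢ`, and let `B`
be a closed densely defined operator commuting with every `Qᵢ` (`Qᵢ B ⊆ B Qᵢ`), with
parts `Bᵢ = B Qᵢ*` in `Hᵢ`. Then `B u = S⁻¹ (Bᵢ Qᵢ u)ᵢ` on `dom B` (i.e. `B u` is the
`ℓ²`-sum of the `Bᵢ Qᵢ u`), and `dom B` consists exactly of those `u` with `Qᵢ u ∈ dom Bᵢ`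
for all `i` and `Σᵢ ‖Bᵢ Qᵢ u‖² < ∞`. -/
theorem closed_operator_l2_decomposition {H : Type*} [NormedAddCommGroup H]
    [InnerProductSpace ℂ H] [CompleteSpace H] {ι : Type*} [Countable ι]
    (Q : ι → H →L[ℂ] H)
    (hidem : ∀ i, ∀ u, Q i (Q i u) = Q i u)
    (hsa : ∀ i, ∀ u v, ⟪Q i u, v⟫_ℂ = ⟪u, Q i v⟫_ℂ)
    (hpair : ∀ i j, i ≠ j → ∀ u, Q i (Q j u) = 0)
    (hsum : ∀ u : H, HasSum (fun i => Q i u) u)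
    (c₁ c₂ : ℝ) (hc₁ : 0 < c₁) (hc₂ : 0 < c₂)
    (hiso : ∀ u : H, Summable (fun i => ‖Q i u‖ ^ 2) ∧
      c₁ * ‖u‖ ^ 2 ≤ ∑' i, ‖Q i u‖ ^ 2 ∧ ∑' i, ‖Q i u‖ ^ 2 ≤ c₂ * ‖u‖ ^ 2)
    (hsurj : ∀ v : ι → H, (∀ i, Q i (v i) = v i) →
      Summable (fun i => ‖v i‖ ^ 2) → ∃ u : H, ∀ i, Q i u = v i)
    (B : H →ₗ.[ℂ] H)
    (hdense : Dense (B.domain : Set H))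
    (hclosed : IsClosed (B.graph : Set (H × H)))
    (hcomm : ∀ i, ∀ u : B.domain, ∃ h : Q i u ∈ B.domain,
      Q i (B u) = B ⟨Q i (u : H), h⟩) :
    (∀ (u : H) (hu : u ∈ B.domain) (hQ : ∀ i, Q i u ∈ B.domain),
      HasSum (fun i => B ⟨Q i u, hQ i⟩) (B ⟨u, hu⟩)) ∧
    (∀ u : H, u ∈ B.domain ↔
      ∃ h : ∀ i, Q i u ∈ B.domain, Summable fun i => ‖B ⟨Q i u, h i⟩‖ ^ 2) := by
  have key : ∀ (u : H) (hu : u ∈ B.domain) (i : ι) (h : Q i u ∈ B.domain),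
      B ⟨Q i u, h⟩ = Q i (B ⟨u, hu⟩) := by
    intro u hu i h
    obtain ⟨h', heq⟩ := hcomm i ⟨u, hu⟩
    exact heq.symm
  constructor
  · intro u hu hQ
    have heq : (fun i => B ⟨Q i u, hQ i⟩) = fun i => Q i (B ⟨u, hu⟩) :=
      funext fun i => key u hu i (hQ i)
    rw [heq]
    exact hsum _
  · intro u
    constructor
    · intro hu
      have hQ : ∀ i, Q i u ∈ B.domain := fun i => (hcomm i ⟨u, hu⟩).1
      refine ⟨hQ, ?_⟩
      have heq : (fun i => ‖B ⟨Q i u, hQ i⟩‖ ^ 2) = fun i => ‖Q i (B ⟨u, hu⟩)‖ ^ 2 := by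
        funext i; rw [key u hu i (hQ i)]
      rw [heq]
      exact (hiso (B ⟨u, hu⟩)).1
    · rintro ⟨h, hsumm⟩
      set v : ι → H := fun i => B ⟨Q i u, h i⟩ with hv
      have hvQ : ∀ i, Q i (v i) = v i := by
        intro i
        obtain ⟨h', heq⟩ := hcomm i ⟨Q i u, h i⟩
        rw [hv]
        simp only
        rw [heq]
        congr 1
        exact Subtype.ext (hidem i u)
      obtain ⟨w, hw⟩ := hsurj v hvQ hsumm
      have hws : HasSum v w := by
        have h1 := hsum w
        simp_rw [hw] at h1
        exact h1
      have hgraph : ∀ s : Finset ι,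
          ((∑ i ∈ s, Q i u, ∑ i ∈ s, v i) : H × H) ∈ B.graph := by
        intro s
        have heq : ((∑ i ∈ s, Q i u, ∑ i ∈ s, v i) : H × H)
            = ∑ i ∈ s, ((Q i u, v i) : H × H) := by
          rw [Prod.ext_iff]
          simp [Prod.fst_sum, Prod.snd_sum]
        rw [heq]
        exact Submodule.sum_mem _ fun i _ => B.mem_graph ⟨Q i u, h i⟩
      have hlim : Filter.Tendsto
          (fun s : Finset ι => ((∑ i ∈ s, Q i u, ∑ i ∈ s, v i) : H × H))
          Filter.atTop (nhds (u, w)) :=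
        (hsum u).prodMk_nhds hws
      have hmem : ((u, w) : H × H) ∈ B.graph :=
        hclosed.mem_of_tendsto hlim (Filter.Eventually.of_forall hgraph)
      obtain ⟨y, hy1, hy2⟩ := B.mem_graph_iff.mp hmem
      exact (show (↑y : H) = u from hy1) ▸ y.2
end

section
/- Kato's second representation theorem consequence (the self-adjoint Kato estimate): Let a : V × V → ℂ be a sesquilinear form on a Hilbert space V densely and continuously embedded in a Hilbert space H, which is bounded, symmetric (a(u,v) = conj(a(v,u))) and coercive: Re a(u,u) ≥ λ‖u‖_V² for some λ > 0. Let L be the associated self-adjoint operator in H. Then dom(√L) = V and ‖√L u‖_H² = a(u,u) ≈ ‖u‖_V² for all u ∈ V. -/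
open scoped InnerProductSpace

theorem aux_A {V : Type*} [NormedAddCommGroup V] [InnerProductSpace ℂ V] [CompleteSpace V]
    (a : V → V → ℂ)
    (hadd₁ : ∀ u v w : V, a (u + v) w = a u w + a v w)
    (hsmul₁ : ∀ (z : ℂ) (u v : V), a (z • u) v = z * a u v)
    (hsymm : ∀ u v : V, a u v = starRingEnd ℂ (a v u))
    (M : ℝ) (hM : 0 < M) (hbdd : ∀ u v : V, ‖a u v‖ ≤ M * ‖u‖ * ‖v‖)
    (lam : ℝ) (hlam : 0 < lam) (hcoercive : ∀ u : V, lam * ‖u‖ ^ 2 ≤ (a u u).re) :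
    ∃ A : V →L[ℂ] V, (∀ v w : V, ⟪A v, w⟫_ℂ = a w v) ∧ Function.Surjective A := by
  have hadd₂ : ∀ u v w : V, a u (v + w) = a u v + a u w := fun u v w => by
    rw [hsymm u (v + w), hadd₁, map_add, ← hsymm, ← hsymm]
  have hsmul₂ : ∀ (z : ℂ) (u v : V), a u (z • v) = (starRingEnd ℂ z) * a u v := fun z u v => by
    rw [hsymm u (z • v), hsmul₁, map_mul, ← hsymm]
  set φ : V → (V →L[ℂ] ℂ) := fun v => LinearMap.mkContinuous
    { toFun := fun w => a w v,
      map_add' := fun x y => hadd₁ x y v,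
      map_smul' := fun z x => hsmul₁ z x v } (M * ‖v‖)
    (fun w => by
      calc ‖a w v‖ ≤ M * ‖w‖ * ‖v‖ := hbdd w v
        _ = M * ‖v‖ * ‖w‖ := by ring) with hφdef
  have hφ : ∀ v w, φ v w = a w v := fun v w => rfl
  set A0 : V → V := fun v => (InnerProductSpace.toDual ℂ V).symm (φ v) with hA0
  have hA0k : ∀ v w, ⟪A0 v, w⟫_ℂ = a w v := fun v w => InnerProductSpace.toDual_symm_apply
  have hadd : ∀ u v, A0 (u + v) = A0 u + A0 v := fun u v => ext_inner_right ℂ fun w => by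
    rw [hA0k, inner_add_left, hA0k, hA0k, hadd₂]
  have hsmul : ∀ (z : ℂ) (v : V), A0 (z • v) = z • A0 v := fun z v => ext_inner_right ℂ fun w => by
    rw [hA0k, inner_smul_left, hA0k, hsmul₂]
  have hbound : ∀ v, ‖A0 v‖ ≤ M * ‖v‖ := fun v => by
    rw [hA0, LinearIsometryEquiv.norm_map]
    exact LinearMap.mkContinuous_norm_le _ (by positivity) _
  set A : V →L[ℂ] V := LinearMap.mkContinuous
    { toFun := A0, map_add' := hadd, map_smul' := hsmul } M hbound with hAdef
  have hAk : ∀ v w, ⟪A v, w⟫_ℂ = a w v := hA0k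
  have hlow : ∀ v : V, lam * ‖v‖ ≤ ‖A v‖ := by
    intro v
    rcases eq_or_ne v 0 with rfl | hv
    · simp
    · have h1 := hcoercive v
      have h2 : (a v v).re ≤ ‖a v v‖ := Complex.re_le_norm _
      have h3 : ‖a v v‖ = ‖⟪A v, v⟫_ℂ‖ := by rw [hAk]
      have h4 : ‖⟪A v, v⟫_ℂ‖ ≤ ‖A v‖ * ‖v‖ := norm_inner_le_norm _ _
      have h5 : 0 < ‖v‖ := norm_pos_iff.mpr hv
      nlinarith [sq_nonneg ‖v‖]
  have hanti : AntilipschitzWith (⟨lam, hlam.le⟩ : NNReal)⁻¹ A := by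
    apply AntilipschitzWith.of_le_mul_dist
    intro x y
    have h1 := hlow (x - y)
    rw [map_sub] at h1
    rw [dist_eq_norm, dist_eq_norm]
    refine le_of_le_of_eq (b := lam⁻¹ * ‖A x - A y‖) ?_ rfl
    rw [← div_eq_inv_mul, le_div_iff₀ hlam]
    linarith
  have hcr : IsClosed (Set.range A) := hanti.isClosed_range A.uniformContinuous
  set S : Submodule ℂ V := LinearMap.range A.toLinearMap with hSdef
  have hSset : (S : Set V) = Set.range A := by
    rw [hSdef, LinearMap.coe_range]; rfl
  have horth : Sᗮ = ⊥ := by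
    rw [Submodule.eq_bot_iff]
    intro z hz
    have h0 : ⟪A z, z⟫_ℂ = 0 :=
      (Submodule.mem_orthogonal S z).mp hz _ (LinearMap.mem_range_self _ z)
    have h1 : a z z = 0 := by rw [← hAk]; exact h0
    have h2 := hcoercive z
    rw [h1] at h2
    simp only [Complex.zero_re] at h2
    have h3 : ‖z‖ ^ 2 ≤ 0 := by nlinarith
    have : ‖z‖ = 0 := by nlinarith [sq_nonneg ‖z‖, norm_nonneg z]
    exact norm_eq_zero.mp this
  have hclos := S.orthogonal_orthogonal_eq_closure
  rw [horth, Submodule.bot_orthogonal_eq_top] at hclos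
  have huniv : Set.range A = Set.univ := by
    have h1 : (S.topologicalClosure : Set V) = Set.univ := by
      rw [← hclos]; rfl
    rw [Submodule.topologicalClosure_coe, hSset, hcr.closure_eq] at h1
    exact h1
  exact ⟨A, hAk, Set.range_eq_univ.mp huniv⟩

theorem aux_solve {V H : Type*}
    [NormedAddCommGroup V] [InnerProductSpace ℂ V] [CompleteSpace V]
    [NormedAddCommGroup H] [InnerProductSpace ℂ H] [CompleteSpace H]
    (e : V →L[ℂ] H) (a : V → V → ℂ)
    (hadd₁ : ∀ u v w : V, a (u + v) w = a u w + a v w)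
    (hsmul₁ : ∀ (z : ℂ) (u v : V), a (z • u) v = z * a u v)
    (hsymm : ∀ u v : V, a u v = starRingEnd ℂ (a v u))
    (M : ℝ) (hM : 0 < M) (hbdd : ∀ u v : V, ‖a u v‖ ≤ M * ‖u‖ * ‖v‖)
    (lam : ℝ) (hlam : 0 < lam) (hcoercive : ∀ u : V, lam * ‖u‖ ^ 2 ≤ (a u u).re) :
    ∀ f : H, ∃ v : V, ∀ w : V, a v w = ⟪e w, f⟫_ℂ := by
  obtain ⟨A, hAk, hAs⟩ := aux_A a hadd₁ hsmul₁ hsymm M hM hbdd lam hlam hcoercive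
  intro f
  set g : V := (InnerProductSpace.toDual ℂ V).symm ((innerSL ℂ f).comp e) with hgdef
  have hg : ∀ w, ⟪g, w⟫_ℂ = ⟪f, e w⟫_ℂ := fun w => InnerProductSpace.toDual_symm_apply
  obtain ⟨v, hv⟩ := hAs g
  refine ⟨v, fun w => ?_⟩
  have h1 : a w v = ⟪f, e w⟫_ℂ := by rw [← hAk v w, hv, hg]
  rw [hsymm v w, h1, inner_conj_symm]

/-- Kato's second representation theorem / the self-adjoint Kato estimate: let `V` be a
Hilbert space densely and continuously embedded (via `e`) in a Hilbert space `H`, and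
let `a : V × V → ℂ` be a bounded, symmetric, coercive sesquilinear form with associated
self-adjoint operator `L` in `H` (`u ∈ dom L, Lu = f` iff `a(u,v) = (f|v)_H` for all
`v ∈ V`). If `Rt` is the nonnegative self-adjoint square root `√L` of `L`, then
`dom √L = V` and `‖√L u‖² = a(u,u) ≈ ‖u‖_V²` for all `u ∈ V`. -/
theorem kato_selfadjoint {V H : Type*}
    [NormedAddCommGroup V] [InnerProductSpace ℂ V] [CompleteSpace V]
    [NormedAddCommGroup H] [InnerProductSpace ℂ H] [CompleteSpace H]
    (e : V →L[ℂ] H) (hinj : Function.Injective e) (hdense : DenseRange e)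
    (a : V → V → ℂ)
    (hadd₁ : ∀ u v w : V, a (u + v) w = a u w + a v w)
    (hsmul₁ : ∀ (z : ℂ) (u v : V), a (z • u) v = z * a u v)
    (hsymm : ∀ u v : V, a u v = starRingEnd ℂ (a v u))
    (M : ℝ) (hM : 0 < M) (hbdd : ∀ u v : V, ‖a u v‖ ≤ M * ‖u‖ * ‖v‖)
    (lam : ℝ) (hlam : 0 < lam) (hcoercive : ∀ u : V, lam * ‖u‖ ^ 2 ≤ (a u u).re)
    (L : H →ₗ.[ℂ] H)
    (hL : ∀ x f : H, (∃ hx : x ∈ L.domain, L ⟨x, hx⟩ = f) ↔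
      ∃ v : V, e v = x ∧ ∀ w : V, a v w = ⟪e w, f⟫_ℂ)
    (Rt : H →ₗ.[ℂ] H)
    (hRtdense : Dense (Rt.domain : Set H))
    (hRtsymm : ∀ u v : Rt.domain, ⟪Rt u, (v : H)⟫_ℂ = ⟪(u : H), Rt v⟫_ℂ)
    (hRtmax : ∀ v w : H, (∀ u : Rt.domain, ⟪Rt u, v⟫_ℂ = ⟪(u : H), w⟫_ℂ) →
      ∃ hv : v ∈ Rt.domain, Rt ⟨v, hv⟩ = w)
    (hRtpos : ∀ u : Rt.domain, 0 ≤ (⟪Rt u, (u : H)⟫_ℂ).re)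
    (hsq_dom : ∀ x : H, x ∈ L.domain ↔
      ∃ h : x ∈ Rt.domain, Rt ⟨x, h⟩ ∈ Rt.domain)
    (hsq : ∀ (x : H) (hx : x ∈ L.domain) (h₁ : x ∈ Rt.domain)
      (h₂ : Rt ⟨x, h₁⟩ ∈ Rt.domain), Rt ⟨Rt ⟨x, h₁⟩, h₂⟩ = L ⟨x, hx⟩) :
    (∀ x : H, x ∈ Rt.domain ↔ ∃ v : V, e v = x) ∧
    (∀ (v : V) (h : e v ∈ Rt.domain), a v v = ((‖Rt ⟨e v, h⟩‖ ^ 2 : ℝ) : ℂ)) ∧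
    ∃ c₁ c₂ : ℝ, 0 < c₁ ∧ 0 < c₂ ∧ ∀ (v : V) (h : e v ∈ Rt.domain),
      c₁ * ‖v‖ ^ 2 ≤ ‖Rt ⟨e v, h⟩‖ ^ 2 ∧ ‖Rt ⟨e v, h⟩‖ ^ 2 ≤ c₂ * ‖v‖ ^ 2 := by
  classical
  have hreal : ∀ v : V, a v v = ((a v v).re : ℂ) := by
    intro v
    exact (Complex.conj_eq_iff_re.mp (hsymm v v).symm).symm
  -- the modified form b(u,v) = a(u,v) + ⟪e v, e u⟫
  set b : V → V → ℂ := fun u v => a u v + ⟪e v, e u⟫_ℂ with hbdef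
  have hbadd₁ : ∀ u v w : V, b (u + v) w = b u w + b v w := by
    intro u v w
    simp only [hbdef, hadd₁, map_add, inner_add_right]
    ring
  have hbsmul₁ : ∀ (z : ℂ) (u v : V), b (z • u) v = z * b u v := by
    intro z u v
    simp only [hbdef, hsmul₁, map_smul, inner_smul_right]
    ring
  have hbsymm : ∀ u v : V, b u v = starRingEnd ℂ (b v u) := by
    intro u v
    simp only [hbdef, map_add, ← hsymm, inner_conj_symm]
  have hbbdd : ∀ u v : V, ‖b u v‖ ≤ (M + ‖e‖ ^ 2) * ‖u‖ * ‖v‖ := by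
    intro u v
    have h1 : ‖b u v‖ ≤ ‖a u v‖ + ‖⟪e v, e u⟫_ℂ‖ := norm_add_le _ _
    have h2 : ‖⟪e v, e u⟫_ℂ‖ ≤ ‖e v‖ * ‖e u‖ := norm_inner_le_norm _ _
    have h3 : ‖e v‖ ≤ ‖e‖ * ‖v‖ := e.le_opNorm v
    have h4 : ‖e u‖ ≤ ‖e‖ * ‖u‖ := e.le_opNorm u
    have h5 := hbdd u v
    have h6 := norm_nonneg (e u); have h7 := norm_nonneg (e v)
    have h8 := norm_nonneg u; have h9 := norm_nonneg v; have h10 := norm_nonneg e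
    nlinarith
  have hbM : 0 < M + ‖e‖ ^ 2 := by positivity
  have hbcoercive : ∀ u : V, lam * ‖u‖ ^ 2 ≤ (b u u).re := by
    intro u
    have h1 : (b u u).re = (a u u).re + ‖e u‖ ^ 2 := by
      simp only [hbdef, Complex.add_re, inner_self_eq_norm_sq_to_K]
      norm_cast
    have h2 := hcoercive u
    nlinarith [sq_nonneg ‖e u‖]
  -- solvability of the variational problems
  have hsolve : ∀ f : H, ∃ v : V, ∀ w : V, a v w = ⟪e w, f⟫_ℂ :=
    aux_solve e a hadd₁ hsmul₁ hsymm M hM hbdd lam hlam hcoercive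
  have hsolve' : ∀ f : H, ∃ v : V, ∀ w : V, b v w = ⟪e w, f⟫_ℂ :=
    aux_solve e b hbadd₁ hbsmul₁ hbsymm _ hbM hbbdd lam hlam hbcoercive
  -- form identity on dom L
  have hform : ∀ (v : V) (hx : e v ∈ L.domain) (w : V), a v w = ⟪e w, L ⟨e v, hx⟩⟫_ℂ := by
    intro v hx w
    obtain ⟨v', hv'e, hv'⟩ := (hL (e v) (L ⟨e v, hx⟩)).mp ⟨hx, rfl⟩
    have hvv : v' = v := hinj hv'e
    subst hvv
    exact hv' w
  have hsolE : ∀ f : H, ∃ v : V, ∃ hx : e v ∈ L.domain, L ⟨e v, hx⟩ = f := by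
    intro f
    obtain ⟨v, hv⟩ := hsolve f
    obtain ⟨hx, hxe⟩ := (hL (e v) f).mpr ⟨v, rfl, hv⟩
    exact ⟨v, hx, hxe⟩
  -- surjectivity of 1 + L
  have hone : ∀ f : H, ∃ (v : V) (hx : e v ∈ L.domain), e v + L ⟨e v, hx⟩ = f := by
    intro f
    obtain ⟨v, hv⟩ := hsolve' f
    have hv' : ∀ w, a v w = ⟪e w, f - e v⟫_ℂ := by
      intro w
      have h0 := hv w
      simp only [hbdef] at h0
      rw [inner_sub_right]
      linear_combination h0
    obtain ⟨hx, heq⟩ := (hL (e v) (f - e v)).mpr ⟨v, rfl, hv'⟩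
    exact ⟨v, hx, by rw [heq]; abel⟩
  -- dom L ⊆ dom Rt
  have hdomLR : ∀ x : H, x ∈ L.domain → x ∈ Rt.domain := by
    intro x hx
    obtain ⟨h1, -⟩ := (hsq_dom x).mp hx
    exact h1
  have hdomLR2 : ∀ (x : H) (hx : x ∈ L.domain) (h1 : x ∈ Rt.domain),
      Rt ⟨x, h1⟩ ∈ Rt.domain := by
    intro x hx h1
    obtain ⟨h1', h2'⟩ := (hsq_dom x).mp hx
    exact h2'
  -- key inner product identity on dom L
  have hkey : ∀ (v : V) (hx : e v ∈ L.domain) (hr : e v ∈ Rt.domain) (y : H)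
      (hy : y ∈ Rt.domain),
      ⟪Rt ⟨e v, hr⟩, Rt ⟨y, hy⟩⟫_ℂ = ⟪L ⟨e v, hx⟩, y⟫_ℂ := by
    intro v hx hr y hy
    have h2 : Rt ⟨e v, hr⟩ ∈ Rt.domain := hdomLR2 _ hx hr
    have h3 := hRtsymm ⟨Rt ⟨e v, hr⟩, h2⟩ ⟨y, hy⟩
    rw [hsq (e v) hx hr h2] at h3
    exact h3.symm
  -- norm-squared identity on dom L
  have hnormL : ∀ (v : V) (hx : e v ∈ L.domain) (hr : e v ∈ Rt.domain),
      ‖Rt ⟨e v, hr⟩‖ ^ 2 = (a v v).re := by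
    intro v hx hr
    have h1 := hkey v hx hr (e v) hr
    have h2 : a v v = ⟪e v, L ⟨e v, hx⟩⟫_ℂ := hform v hx v
    have h3 : ⟪L ⟨e v, hx⟩, e v⟫_ℂ = starRingEnd ℂ (a v v) := by
      rw [h2, inner_conj_symm]
    rw [← inner_self_eq_norm_sq (𝕜 := ℂ), h1, h3]
    simp
  -- closedness of Rt
  have hclosed : ∀ (x y : H) (u : ℕ → H) (hu : ∀ n, u n ∈ Rt.domain),
      Filter.Tendsto u Filter.atTop (nhds x) →
      Filter.Tendsto (fun n => Rt ⟨u n, hu n⟩) Filter.atTop (nhds y) →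
      ∃ hx : x ∈ Rt.domain, Rt ⟨x, hx⟩ = y := by
    intro x y u hu hux huy
    apply hRtmax
    intro w
    have h1 : Filter.Tendsto (fun n => ⟪Rt w, u n⟫_ℂ) Filter.atTop (nhds ⟪Rt w, x⟫_ℂ) :=
      Filter.Tendsto.inner tendsto_const_nhds hux
    have h2 : Filter.Tendsto (fun n => ⟪(w : H), Rt ⟨u n, hu n⟩⟫_ℂ) Filter.atTop
        (nhds ⟪(w : H), y⟫_ℂ) :=
      Filter.Tendsto.inner tendsto_const_nhds huy
    have h3 : (fun n => ⟪Rt w, u n⟫_ℂ) = fun n => ⟪(w : H), Rt ⟨u n, hu n⟩⟫_ℂ := by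
      funext n
      exact hRtsymm w ⟨u n, hu n⟩
    rw [h3] at h1
    exact tendsto_nhds_unique h1 h2
  obtain ⟨A, hAk, hAs⟩ := aux_A a hadd₁ hsmul₁ hsymm M hM hbdd lam hlam hcoercive
  -- E : preimage of dom L in V, is dense in V
  set E : Submodule ℂ V := L.domain.comap (e : V →ₗ[ℂ] H) with hEdef
  have hEmem : ∀ d : V, d ∈ E ↔ e d ∈ L.domain := fun d => Iff.rfl
  have hEdense : E.topologicalClosure = ⊤ := by
    have horth : Eᗮ = ⊥ := by
      rw [Submodule.eq_bot_iff]
      intro z hz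
      obtain ⟨w, hw⟩ := hAs z
      have hza : ∀ d ∈ E, a d w = 0 := by
        intro d hd
        rw [← hAk w d, hw]
        exact (Submodule.mem_orthogonal' E z).mp hz d hd
      obtain ⟨v₀, hx₀, hL₀⟩ := hsolE (e w)
      have hv₀E : v₀ ∈ E := hx₀
      have h1 : a v₀ w = ⟪e w, e w⟫_ℂ := by
        rw [hform v₀ hx₀ w, hL₀]
      have h2 : ⟪e w, e w⟫_ℂ = 0 := by rw [← h1, hza v₀ hv₀E]
      have h3 : e w = 0 := inner_self_eq_zero.mp h2
      have h4 : w = 0 := hinj (by rw [h3, map_zero])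
      rw [← hw, h4, map_zero]
    have hclos := E.orthogonal_orthogonal_eq_closure
    rw [horth, Submodule.bot_orthogonal_eq_top] at hclos
    exact hclos.symm
  have hseq : ∀ v : V, ∃ u : ℕ → V, (∀ n, u n ∈ E) ∧
      Filter.Tendsto u Filter.atTop (nhds v) := by
    intro v
    have hv : v ∈ closure (E : Set V) := by
      rw [← Submodule.topologicalClosure_coe, hEdense]
      trivial
    obtain ⟨u, hu1, hu2⟩ := mem_closure_iff_seq_limit.mp hv
    exact ⟨u, hu1, hu2⟩
  -- bound on dom L
  have hbd2 : ∀ (d : V) (hd : e d ∈ L.domain) (hr : e d ∈ Rt.domain),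
      ‖Rt ⟨e d, hr⟩‖ ≤ Real.sqrt M * ‖d‖ := by
    intro d hd hr
    have h1 : ‖Rt ⟨e d, hr⟩‖ ^ 2 ≤ M * ‖d‖ ^ 2 := by
      rw [hnormL d hd hr]
      calc (a d d).re ≤ ‖a d d‖ := Complex.re_le_norm _
        _ ≤ M * ‖d‖ * ‖d‖ := hbdd d d
        _ = M * ‖d‖ ^ 2 := by ring
    calc ‖Rt ⟨e d, hr⟩‖ = Real.sqrt (‖Rt ⟨e d, hr⟩‖ ^ 2) :=
        (Real.sqrt_sq (norm_nonneg _)).symm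
      _ ≤ Real.sqrt (M * ‖d‖ ^ 2) := Real.sqrt_le_sqrt h1
      _ = Real.sqrt M * ‖d‖ := by
          rw [Real.sqrt_mul hM.le, Real.sqrt_sq (norm_nonneg _)]
  -- every e v is in dom Rt, with the norm identity
  have hK6 : ∀ v : V, ∃ hr : e v ∈ Rt.domain, ‖Rt ⟨e v, hr⟩‖ ^ 2 = (a v v).re := by
    intro v
    obtain ⟨u, huE, huv⟩ := hseq v
    have hud : ∀ n, e (u n) ∈ L.domain := fun n => huE n
    have hur : ∀ n, e (u n) ∈ Rt.domain := fun n => hdomLR _ (hud n)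
    set r : ℕ → H := fun n => Rt ⟨e (u n), hur n⟩ with hrdef
    have hrb : ∀ m n : ℕ, ‖r m - r n‖ ≤ Real.sqrt M * ‖u m - u n‖ := by
      intro m n
      have hdE : u m - u n ∈ E := sub_mem (huE m) (huE n)
      have hdd : e (u m - u n) ∈ L.domain := hdE
      have hdr : e (u m - u n) ∈ Rt.domain := hdomLR _ hdd
      have heq : r m - r n = Rt ⟨e (u m - u n), hdr⟩ := by
        rw [hrdef]
        have h0 : (⟨e (u m - u n), hdr⟩ : Rt.domain)
            = ⟨e (u m), hur m⟩ - ⟨e (u n), hur n⟩ := Subtype.ext (by simp [map_sub])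
        rw [h0, Rt.map_sub]
      rw [heq]
      exact hbd2 _ hdd hdr
    have hucau : CauchySeq u := huv.cauchySeq
    have hrcau : CauchySeq r := by
      rw [Metric.cauchySeq_iff] at hucau ⊢
      intro ε hε
      have hsM : (0 : ℝ) < Real.sqrt M + 1 := by positivity
      obtain ⟨N, hN⟩ := hucau (ε / (Real.sqrt M + 1)) (by positivity)
      refine ⟨N, fun m hm n hn => ?_⟩
      have h1 := hN m hm n hn
      rw [dist_eq_norm] at h1 ⊢
      have h4 : ‖u m - u n‖ * (Real.sqrt M + 1) < ε := (lt_div_iff₀ hsM).mp h1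
      have h5 := hrb m n
      have h6 := norm_nonneg (u m - u n)
      nlinarith
    obtain ⟨y, hy⟩ := cauchySeq_tendsto_of_complete hrcau
    have hex : Filter.Tendsto (fun n => e (u n)) Filter.atTop (nhds (e v)) :=
      (e.continuous.tendsto v).comp huv
    obtain ⟨hr, hry⟩ := hclosed (e v) y (fun n => e (u n)) hur hex hy
    refine ⟨hr, ?_⟩
    rw [hry]
    have h1 : Filter.Tendsto (fun n => ‖r n‖ ^ 2) Filter.atTop (nhds (‖y‖ ^ 2)) :=
      hy.norm.pow 2
    have h2 : (fun n => ‖r n‖ ^ 2) = fun n => (a (u n) (u n)).re := by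
      funext n
      exact hnormL (u n) (hud n) (hur n)
    have h3 : Filter.Tendsto (fun n => a (u n) (u n)) Filter.atTop (nhds (a v v)) := by
      have hA : Filter.Tendsto (fun n => ⟪A (u n), u n⟫_ℂ) Filter.atTop
          (nhds ⟪A v, v⟫_ℂ) :=
        Filter.Tendsto.inner ((A.continuous.tendsto v).comp huv) huv
      have heq : (fun n => ⟪A (u n), u n⟫_ℂ) = fun n => a (u n) (u n) := by
        funext n
        exact hAk (u n) (u n)
      rw [heq, hAk v v] at hA
      exact hA
    have h4 : Filter.Tendsto (fun n => (a (u n) (u n)).re) Filter.atTop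
        (nhds ((a v v).re)) := (Complex.continuous_re.tendsto _).comp h3
    rw [h2] at h1
    exact tendsto_nhds_unique h1 h4
  have hEVR : ∀ v : V, e v ∈ Rt.domain := fun v => (hK6 v).choose
  have hnormV : ∀ (v : V) (hr : e v ∈ Rt.domain), ‖Rt ⟨e v, hr⟩‖ ^ 2 = (a v v).re :=
    fun v _ => (hK6 v).choose_spec
  -- the map RtE and its properties
  set RtE : V → H := fun w => Rt ⟨e w, hEVR w⟩ with hRtEdef
  have hRtEadd : ∀ u w : V, RtE (u + w) = RtE u + RtE w := by
    intro u w
    have h0 : (⟨e (u + w), hEVR (u + w)⟩ : Rt.domain)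
        = ⟨e u, hEVR u⟩ + ⟨e w, hEVR w⟩ := Subtype.ext (by simp [map_add])
    rw [hRtEdef]
    simp only
    rw [h0, Rt.map_add]
  have hRtEsmul : ∀ (z : ℂ) (w : V), RtE (z • w) = z • RtE w := by
    intro z w
    have h0 : (⟨e (z • w), hEVR (z • w)⟩ : Rt.domain)
        = z • ⟨e w, hEVR w⟩ := Subtype.ext (by simp [map_smul])
    rw [hRtEdef]
    simp only
    rw [h0, Rt.map_smul]
  have hRtEbd : ∀ w : V, ‖RtE w‖ ≤ Real.sqrt M * ‖w‖ := by
    intro w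
    have h1 : ‖RtE w‖ ^ 2 ≤ M * ‖w‖ ^ 2 := by
      rw [hRtEdef]
      simp only
      rw [hnormV w (hEVR w)]
      calc (a w w).re ≤ ‖a w w‖ := Complex.re_le_norm _
        _ ≤ M * ‖w‖ * ‖w‖ := hbdd w w
        _ = M * ‖w‖ ^ 2 := by ring
    calc ‖RtE w‖ = Real.sqrt (‖RtE w‖ ^ 2) := (Real.sqrt_sq (norm_nonneg _)).symm
      _ ≤ Real.sqrt (M * ‖w‖ ^ 2) := Real.sqrt_le_sqrt h1
      _ = Real.sqrt M * ‖w‖ := by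
          rw [Real.sqrt_mul hM.le, Real.sqrt_sq (norm_nonneg _)]
  -- dom Rt ⊆ e(V)
  have hK7 : ∀ x : H, x ∈ Rt.domain → ∃ v : V, e v = x := by
    intro x hx
    set y : H := Rt ⟨x, hx⟩ with hydef
    set F : V →ₗ[ℂ] ℂ :=
      { toFun := fun w => ⟪x, e w⟫_ℂ + ⟪y, RtE w⟫_ℂ,
        map_add' := by
          intro u w
          show ⟪x, e (u + w)⟫_ℂ + ⟪y, RtE (u + w)⟫_ℂ = _
          rw [map_add, hRtEadd, inner_add_right, inner_add_right]
          ring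
        map_smul' := by
          intro z w
          show ⟪x, e (z • w)⟫_ℂ + ⟪y, RtE (z • w)⟫_ℂ
            = (RingHom.id ℂ) z • (⟪x, e w⟫_ℂ + ⟪y, RtE w⟫_ℂ)
          rw [map_smul, hRtEsmul, inner_smul_right, inner_smul_right]
          simp only [RingHom.id_apply, smul_eq_mul]
          ring } with hFdef
    have hFb : ∀ w, ‖F w‖ ≤ (‖x‖ * ‖e‖ + ‖y‖ * Real.sqrt M) * ‖w‖ := by
      intro w
      have h1 : ‖F w‖ ≤ ‖⟪x, e w⟫_ℂ‖ + ‖⟪y, RtE w⟫_ℂ‖ := norm_add_le _ _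
      have h2 : ‖⟪x, e w⟫_ℂ‖ ≤ ‖x‖ * ‖e w‖ := norm_inner_le_norm _ _
      have h3 : ‖⟪y, RtE w⟫_ℂ‖ ≤ ‖y‖ * ‖RtE w‖ := norm_inner_le_norm _ _
      have h4 : ‖e w‖ ≤ ‖e‖ * ‖w‖ := e.le_opNorm w
      have h5 := hRtEbd w
      have h6 := norm_nonneg x; have h7 := norm_nonneg y
      have h8 := norm_nonneg (e w); have h9 := norm_nonneg (RtE w)
      nlinarith
    set Fc : V →L[ℂ] ℂ := LinearMap.mkContinuous F _ hFb with hFcdef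
    set g : V := (InnerProductSpace.toDual ℂ V).symm Fc with hgdef
    have hg : ∀ w, ⟪g, w⟫_ℂ = ⟪x, e w⟫_ℂ + ⟪y, RtE w⟫_ℂ := fun w =>
      InnerProductSpace.toDual_symm_apply
    obtain ⟨B, hBk, hBs⟩ := aux_A b hbadd₁ hbsmul₁ hbsymm _ hbM hbbdd lam hlam hbcoercive
    obtain ⟨v, hv⟩ := hBs g
    have hbv : ∀ w : V, b v w = ⟪e w, x⟫_ℂ + ⟪RtE w, y⟫_ℂ := by
      intro w
      have h1 : b w v = ⟪x, e w⟫_ℂ + ⟪y, RtE w⟫_ℂ := by rw [← hBk v w, hv, hg]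
      calc b v w = starRingEnd ℂ (b w v) := hbsymm v w
        _ = _ := by rw [h1, map_add, inner_conj_symm, inner_conj_symm]
    have horthog : ∀ f : H, ⟪f, e v - x⟫_ℂ = 0 := by
      intro f
      obtain ⟨w, hw, hwf⟩ := hone f
      have h1 := hbv w
      have h2 : a v w = ⟪L ⟨e w, hw⟩, e v⟫_ℂ := by
        rw [hsymm v w, hform w hw v, inner_conj_symm]
      have h3 : ⟪RtE w, y⟫_ℂ = ⟪L ⟨e w, hw⟩, x⟫_ℂ := hkey w hw (hEVR w) x hx
      simp only [hbdef] at h1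
      rw [h2, h3] at h1
      have h4 : ⟪e w + L ⟨e w, hw⟩, e v - x⟫_ℂ = 0 := by
        rw [inner_sub_right, inner_add_left, inner_add_left]
        linear_combination h1
      rw [← hwf]
      exact h4
    have h5 : e v - x = 0 := inner_self_eq_zero.mp (horthog (e v - x))
    exact ⟨v, sub_eq_zero.mp h5⟩
  refine ⟨?_, ?_, ?_⟩
  · intro x
    constructor
    · exact hK7 x
    · rintro ⟨v, rfl⟩
      exact hEVR v
  · intro v h
    rw [hreal v, hnormV v h]
  · refine ⟨lam, M, hlam, hM, fun v h => ?_⟩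
    have h1 := hnormV v h
    constructor
    · rw [h1]; exact hcoercive v
    · rw [h1]
      calc (a v v).re ≤ ‖a v v‖ := Complex.re_le_norm _
        _ ≤ M * ‖v‖ * ‖v‖ := hbdd v v
        _ = M * ‖v‖ ^ 2 := by ring
end

section
/- In an open set O ⊆ ℝ^d, every set of the form ∂Q \ O for Q a cube of a fixed grid intersecting the closure of the complement appropriately satisfies: the boundary decomposition ∂(O ∪ ⋃_{Q∈Σ'} (Q \ ∂O)) = ∂O ∪ ⋃_{Q∈Σ'}(∂Q \ O), where Σ' is a collection of open grid cubes, each Q ∈ Σ' satisfying Q ∩ N_{δ/4} = ∅ and cl(Q) ∩ D ≠ ∅, and the cubes of the grid Σ have diameter δ/8. In particular, setting 𝐎 = O ∪ ⋃_{Q∈Σ'}(Q \ ∂O), one has 𝐎 \ O open and ∂O ⊆ ∂𝐎. -/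
/-- `Q` is an open axis-parallel cube with lower corner `a` and side length `l`. -/
def IsCube {d : ℕ} (Q : Set (EuclideanSpace ℝ (Fin d))) : Prop :=
  ∃ (a : Fin d → ℝ) (l : ℝ), 0 < l ∧
    Q = {x : EuclideanSpace ℝ (Fin d) | ∀ i, a i < x i ∧ x i < a i + l}

/-- Boundary decomposition for the fattening construction: let `O ⊆ ℝ^d` be open,
`D ⊆ ∂O` closed, `N = ∂O \ D`, and let `Grid` be a grid of pairwise disjoint open
axis-parallel cubes of diameter `δ/8` whose closures cover `ℝ^d`, with
`Σ' = {Q ∈ Grid : cl(Q) ∩ D ≠ ∅ and Q ∩ N_{δ/4} = ∅}`. Then, with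
`𝐎 = O ∪ ⋃_{Q ∈ Σ'} (Q \ ∂O)`, one has
`∂𝐎 = ∂O ∪ ⋃_{Q ∈ Σ'} (∂Q \ O)`; in particular `𝐎 \ O` is open and `∂O ⊆ ∂𝐎`. -/
theorem fattening_boundary_decomposition {d : ℕ}
    (O D : Set (EuclideanSpace ℝ (Fin d))) (hO : IsOpen O)
    (hD : D ⊆ frontier O) (hDclosed : IsClosed D) (δ : ℝ) (hδ : 0 < δ)
    (Grid : Set (Set (EuclideanSpace ℝ (Fin d))))
    (hcube : ∀ Q ∈ Grid, IsCube Q)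
    (hopen : ∀ Q ∈ Grid, IsOpen Q)
    (hdiam : ∀ Q ∈ Grid, EMetric.diam Q = ENNReal.ofReal (δ / 8))
    (hdisj : ∀ Q ∈ Grid, ∀ Q' ∈ Grid, Q ≠ Q' → Q ∩ Q' = ∅)
    (hbd : ∀ Q ∈ Grid, ∀ Q' ∈ Grid, frontier Q ∩ Q' = ∅)
    (hcover : ⋃ Q ∈ Grid, closure Q = Set.univ)
    (hlocfin : ∀ x : EuclideanSpace ℝ (Fin d), ∃ ρ : ℝ, 0 < ρ ∧
      {Q ∈ Grid | (Metric.ball x ρ ∩ Q).Nonempty}.Finite)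
    (Sig' : Set (Set (EuclideanSpace ℝ (Fin d))))
    (hSig' : Sig' = {Q ∈ Grid | (closure Q ∩ D).Nonempty ∧
      Q ∩ Nbhd (frontier O \ D) (δ / 4) = ∅})
    (bigO : Set (EuclideanSpace ℝ (Fin d)))
    (hbigO : bigO = O ∪ ⋃ Q ∈ Sig', (Q \ frontier O)) :
    frontier bigO = frontier O ∪ ⋃ Q ∈ Sig', (frontier Q \ O) ∧
    IsOpen (bigO \ O) ∧ frontier O ⊆ frontier bigO := by
  have hSub : Sig' ⊆ Grid := by
    rw [hSig']; intro Q hQ; exact hQ.1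
  have hpiece : ∀ Q ∈ Sig', IsOpen (Q \ frontier O) :=
    fun Q hQ => (hopen Q (hSub hQ)).sdiff isClosed_frontier
  have hBopen : IsOpen bigO := by
    rw [hbigO]
    exact hO.union (isOpen_iUnion fun Q => isOpen_iUnion fun hQ => hpiece Q hQ)
  have hOsub : O ⊆ bigO := by rw [hbigO]; exact Set.subset_union_left
  have hif : interior (frontier O) = ∅ := by
    rw [← frontier_compl]; exact interior_frontier hO.isClosed_compl
  -- closure (Q \ frontier O) = closure Q for open Q
  have hclQ : ∀ Q : Set (EuclideanSpace ℝ (Fin d)), IsOpen Q →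
      closure (Q \ frontier O) = closure Q := by
    intro Q hQo
    refine le_antisymm (closure_mono Set.diff_subset) (closure_minimal ?_ isClosed_closure)
    intro x hx
    rw [mem_closure_iff]
    intro U hU hxU
    by_contra hcon
    rw [Set.not_nonempty_iff_eq_empty] at hcon
    have hsub : U ∩ Q ⊆ frontier O := by
      intro y hy
      by_contra hy'
      exact Set.eq_empty_iff_forall_notMem.mp hcon y ⟨hy.1, hy.2, hy'⟩
    have h2 : U ∩ Q ⊆ interior (frontier O) := interior_maximal hsub (hU.inter hQo)
    rw [hif] at h2
    exact h2 ⟨hxU, hx⟩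
  -- local finiteness of the family
  have hlf : LocallyFinite (fun Q : Sig' => (Q : Set (EuclideanSpace ℝ (Fin d))) \ frontier O) := by
    intro x
    obtain ⟨ρ, hρ, hfin⟩ := hlocfin x
    refine ⟨Metric.ball x ρ, Metric.ball_mem_nhds x hρ, ?_⟩
    have hss : {i : Sig' | ((↑i : Set _) \ frontier O ∩ Metric.ball x ρ).Nonempty} ⊆
        Subtype.val ⁻¹' {Q ∈ Grid | (Metric.ball x ρ ∩ Q).Nonempty} := by
      rintro ⟨Q, hQ⟩ ⟨y, ⟨hy1, _⟩, hy2⟩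
      exact ⟨hSub hQ, y, hy2, hy1⟩
    exact Set.Finite.subset (hfin.preimage (Subtype.val_injective.injOn)) hss
  -- closure of the union
  have hclU : closure (⋃ Q ∈ Sig', (Q \ frontier O)) = ⋃ Q ∈ Sig', closure Q := by
    calc closure (⋃ Q ∈ Sig', (Q \ frontier O))
        = closure (⋃ Q : Sig', ((Q : Set _) \ frontier O)) := by
          rw [Set.iUnion_coe_set]
      _ = ⋃ Q : Sig', closure ((Q : Set _) \ frontier O) := hlf.closure_iUnion
      _ = ⋃ Q : Sig', closure (Q : Set _) :=
          Set.iUnion_congr fun Q => hclQ _ (hopen _ (hSub Q.2))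
      _ = ⋃ Q ∈ Sig', closure Q := Set.iUnion_coe_set _ _
  have hclB : closure bigO = closure O ∪ ⋃ Q ∈ Sig', closure Q := by
    rw [hbigO, closure_union, hclU]
  -- main equality
  have hmain : frontier bigO = frontier O ∪ ⋃ Q ∈ Sig', (frontier Q \ O) := by
    rw [hBopen.frontier_eq, hclB]
    ext x
    constructor
    · rintro ⟨hxc, hxB⟩
      by_cases hxO : x ∈ closure O
      · left
        rw [hO.frontier_eq]
        exact ⟨hxO, fun h => hxB (hOsub h)⟩
      · rcases hxc with hxc | hxc
        · exact (hxO hxc).elim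
        · right
          simp only [Set.mem_iUnion] at hxc ⊢
          obtain ⟨Q, hQ, hxQ⟩ := hxc
          refine ⟨Q, hQ, ?_, fun h => hxO (subset_closure h)⟩
          rw [(hopen Q (hSub hQ)).frontier_eq]
          refine ⟨hxQ, fun hxQ' => ?_⟩
          apply hxB
          rw [hbigO]
          right
          exact Set.mem_biUnion hQ ⟨hxQ', fun h => hxO h.1⟩
    · rintro (hx | hx)
      · refine ⟨Or.inl (frontier_subset_closure hx), ?_⟩
        rw [hbigO]
        rintro (h | h)
        · rw [hO.frontier_eq] at hx; exact hx.2 h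
        · simp only [Set.mem_iUnion] at h
          obtain ⟨Q, hQ, _, h2⟩ := h
          exact h2 hx
      · simp only [Set.mem_iUnion] at hx
        obtain ⟨Q, hQ, hxf, hxO⟩ := hx
        refine ⟨Or.inr (Set.mem_biUnion hQ (frontier_subset_closure hxf)), ?_⟩
        rw [hbigO]
        rintro (h | h)
        · exact hxO h
        · simp only [Set.mem_iUnion] at h
          obtain ⟨Q', hQ', h1, _⟩ := h
          have hxx : x ∈ frontier Q ∩ Q' := ⟨hxf, h1⟩
          rw [hbd Q (hSub hQ) Q' (hSub hQ')] at hxx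
          exact hxx
  refine ⟨hmain, ?_, hmain ▸ Set.subset_union_left⟩
  -- bigO \ O open
  have hsplit : bigO \ O = ⋃ Q ∈ Sig', (Q \ closure O) := by
    ext x
    simp only [Set.mem_diff, hbigO, Set.mem_union, Set.mem_iUnion]
    constructor
    · rintro ⟨h | h, hxO⟩
      · exact (hxO h).elim
      · obtain ⟨Q, hQ, h1, h2⟩ := h
        refine ⟨Q, hQ, h1, fun hc => ?_⟩
        exact h2 (by rw [hO.frontier_eq]; exact ⟨hc, hxO⟩)
    · rintro ⟨Q, hQ, h1, h2⟩
      exact ⟨Or.inr ⟨Q, hQ, h1, fun hc => h2 (frontier_subset_closure hc)⟩,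
        fun hc => h2 (subset_closure hc)⟩
  rw [hsplit]
  exact isOpen_iUnion fun Q => isOpen_iUnion fun hQ =>
    (hopen Q (hSub hQ)).sdiff isClosed_closure
end

section
/- Invariance of the form domain under good projections transfers to the operator: Let H be a Hilbert space, V ⊆ H dense, a : V × V → ℂ a bounded coercive sesquilinear form, and L the associated operator in H. Let Q be an orthogonal projection on H that maps V boundedly into V and satisfies a(Qu, v) = a(u, Qv) for all u, v ∈ V. Then Q L ⊆ L Q, i.e., for every u ∈ dom(L) one has Qu ∈ dom(L) and L(Qu) = Q(Lu). -/
open scoped InnerProductSpace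

/-- Invariance of the form domain under good projections transfers to the operator:
let `V` be a Hilbert space densely and continuously embedded (via `e`) in a Hilbert
space `H`, `a : V × V → ℂ` a bounded coercive sesquilinear form with associated
operator `L` in `H`, and let `Q` be an orthogonal projection on `H` which maps `V`
boundedly into itself (via `Qv` with `e ∘ Qv = Q ∘ e`) and satisfies
`a(Qu, v) = a(u, Qv)`. Then `Q L ⊆ L Q`: for every `x ∈ dom L` one has `Qx ∈ dom L`
and `L(Qx) = Q(Lx)`. -/
theorem proj_commutes_with_form_operator {V H : Type*}
    [NormedAddCommGroup V] [InnerProductSpace ℂ V] [CompleteSpace V]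
    [NormedAddCommGroup H] [InnerProductSpace ℂ H] [CompleteSpace H]
    (e : V →L[ℂ] H) (hinj : Function.Injective e) (hdense : DenseRange e)
    (a : V → V → ℂ)
    (hadd₁ : ∀ u v w : V, a (u + v) w = a u w + a v w)
    (hsmul₁ : ∀ (z : ℂ) (u v : V), a (z • u) v = z * a u v)
    (hadd₂ : ∀ u v w : V, a u (v + w) = a u v + a u w)
    (hsmul₂ : ∀ (z : ℂ) (u v : V), a u (z • v) = starRingEnd ℂ z * a u v)
    (M : ℝ) (hM : 0 < M) (hbdd : ∀ u v : V, ‖a u v‖ ≤ M * ‖u‖ * ‖v‖)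
    (lam : ℝ) (hlam : 0 < lam) (hcoercive : ∀ u : V, lam * ‖u‖ ^ 2 ≤ (a u u).re)
    (L : H →ₗ.[ℂ] H)
    (hL : ∀ x f : H, (∃ hx : x ∈ L.domain, L ⟨x, hx⟩ = f) ↔
      ∃ v : V, e v = x ∧ ∀ w : V, a v w = ⟪e w, f⟫_ℂ)
    (Q : H →L[ℂ] H)
    (hidem : ∀ u, Q (Q u) = Q u)
    (hsa : ∀ u v, ⟪Q u, v⟫_ℂ = ⟪u, Q v⟫_ℂ)
    (Qv : V →L[ℂ] V)
    (hQv : ∀ v : V, e (Qv v) = Q (e v))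
    (hform : ∀ u v : V, a (Qv u) v = a u (Qv v)) :
    ∀ (x : H) (hx : x ∈ L.domain), ∃ h : Q x ∈ L.domain,
      L ⟨Q x, h⟩ = Q (L ⟨x, hx⟩) := by
  intro x hx
  set f := L ⟨x, hx⟩ with hf
  obtain ⟨v, hv, hav⟩ := (hL x f).mp ⟨hx, rfl⟩
  exact (hL (Q x) (Q f)).mpr ⟨Qv v, by rw [hQv, hv], fun w => by
    rw [hform, hav (Qv w), hQv, ← hsa]⟩
end

section
/- Decomposition of the square root property: Let H be a Hilbert space decomposed into invariant pieces by pairwise orthogonal projections (Qᵢ) with H ≅ ⊕ᵢ QᵢH via S : u ↦ (Qᵢu)ᵢ, let V ⊆ H be a Hilbert space densely embedded with V ≅ ⊕ᵢ QᵢV under the same map, and let L be a maximal accretive invertible operator in H commuting with all Qᵢ, with parts Lᵢ = L Qᵢ* in QᵢH and Vᵢ = QᵢV. Then the following are equivalent: (i) dom(√L) = V with ‖√L u‖_H ≈ ‖u‖_V; (ii) for all i, dom(√Lᵢ) = Vᵢ with ‖√Lᵢ u‖ ≈ ‖u‖_{Vᵢ} with implicit constants independent of i. -/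
open scoped InnerProductSpace

lemma pythagoras_hasSum {H : Type*} [NormedAddCommGroup H] [InnerProductSpace ℂ H]
    {ι : Type*} (f : ι → H) (u : H) (hf : HasSum f u)
    (h : ∀ i, ⟪u, f i⟫_ℂ = (‖f i‖ ^ 2 : ℂ)) :
    HasSum (fun i => ‖f i‖ ^ 2) (‖u‖ ^ 2) := by
  have h1 : HasSum (fun i => ⟪u, f i⟫_ℂ) ⟪u, u⟫_ℂ := hf.mapL (innerSL ℂ u)
  have h2 := h1.mapL Complex.reCLM
  simp only [h] at h2
  have h3 : Complex.reCLM ⟪u, u⟫_ℂ = ‖u‖ ^ 2 := by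
    simpa using inner_self_eq_norm_sq (𝕜 := ℂ) u
  rw [h3] at h2
  convert h2 using 2 with i
  norm_cast

lemma summable_of_sq {E : Type*} [NormedAddCommGroup E] [CompleteSpace E] {ι : Type*}
    (g : ι → E) (C : ℝ) (hC0 : 0 < C)
    (hC : ∀ t : Finset ι, ‖∑ i ∈ t, g i‖ ^ 2 ≤ C * ∑ i ∈ t, ‖g i‖ ^ 2)
    (hs : Summable (fun i => ‖g i‖ ^ 2)) : Summable g := by
  rw [summable_iff_vanishing]
  intro s hs0
  obtain ⟨ε, hε, hball⟩ := Metric.mem_nhds_iff.mp hs0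
  obtain ⟨t, ht⟩ := (summable_iff_vanishing.mp hs) (Metric.ball 0 (ε ^ 2 / C))
    (Metric.ball_mem_nhds 0 (by positivity))
  refine ⟨t, fun t' ht' => hball ?_⟩
  have h1 := ht t' ht'
  rw [Metric.mem_ball, dist_zero_right, Real.norm_eq_abs] at h1
  have h2 : ∑ i ∈ t', ‖g i‖ ^ 2 < ε ^ 2 / C := lt_of_le_of_lt (le_abs_self _) h1
  have h3 : ‖∑ i ∈ t', g i‖ ^ 2 < ε ^ 2 := by
    calc ‖∑ i ∈ t', g i‖ ^ 2 ≤ C * ∑ i ∈ t', ‖g i‖ ^ 2 := hC t'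
    _ < C * (ε ^ 2 / C) := by exact (mul_lt_mul_iff_right₀ hC0).mpr h2
    _ = ε ^ 2 := by field_simp
  rw [Metric.mem_ball, dist_zero_right]
  exact lt_of_pow_lt_pow_left₀ 2 hε.le h3

lemma closed_of_resolvent {H : Type*} [NormedAddCommGroup H] [InnerProductSpace ℂ H]
    (Rt : H →ₗ.[ℂ] H)
    (hRtmaxacc : ∀ z : ℂ, 0 < z.re → ∃ R : H →L[ℂ] H,
      (∀ u : Rt.domain, R (z • (u : H) + Rt u) = u) ∧
      (∀ v : H, ∃ hv : R v ∈ Rt.domain, z • R v + Rt ⟨R v, hv⟩ = v) ∧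
      ‖R‖ ≤ (z.re)⁻¹)
    {γ : Type*} {l : Filter γ} [l.NeBot] (u : γ → Rt.domain) {x y : H}
    (hx : Filter.Tendsto (fun t => (u t : H)) l (nhds x))
    (hy : Filter.Tendsto (fun t => Rt (u t)) l (nhds y)) :
    ∃ hx : x ∈ Rt.domain, Rt ⟨x, hx⟩ = y := by
  obtain ⟨R, h1, h2, -⟩ := hRtmaxacc 1 (by norm_num)
  have hxy : Filter.Tendsto (fun t => ((u t : H) + Rt (u t))) l (nhds (x + y)) := hx.add hy
  have hR : Filter.Tendsto (fun t => R ((u t : H) + Rt (u t))) l (nhds (R (x + y))) :=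
    (R.continuous.tendsto _).comp hxy
  have heq : (fun t => R ((u t : H) + Rt (u t))) = fun t => (u t : H) := by
    funext t; have := h1 (u t); simpa using this
  rw [heq] at hR
  have hx' : x = R (x + y) := tendsto_nhds_unique hx hR
  obtain ⟨hv, hveq⟩ := h2 (x + y)
  rw [one_smul] at hveq
  have key : Rt ⟨R (x + y), hv⟩ = y := by
    set w := Rt ⟨R (x + y), hv⟩ with hw
    rw [← hx'] at hveq
    exact add_left_cancel hveq
  refine ⟨hx' ▸ hv, ?_⟩
  have hcast : Rt ⟨x, hx' ▸ hv⟩ = Rt ⟨R (x + y), hv⟩ := by congr 1; exact Subtype.ext hx'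
  rw [hcast, key]
/-- Decomposition of the square root property (Kato estimate) along an
`ℓ²`-decomposition by pairwise orthogonal projections: let `H ≅ ⊕ᵢ QᵢH` via
`S : u ↦ (Qᵢu)ᵢ`, let `V` be densely embedded in `H` (via `e`) with `V ≅ ⊕ᵢ QᵢV` under
the same map, and let `L` be a maximal accretive invertible operator in `H` commuting
with all `Qᵢ`, with parts `Lᵢ = L Qᵢ*` and `Vᵢ = Qᵢ V`, and with maximal accretive
square root `Rt = √L`. Then the following are equivalent: (i) `dom √L = V` with
`‖√L u‖_H ≈ ‖u‖_V`; (ii) for all `i`, `dom √Lᵢ = Vᵢ` with `‖√Lᵢ u‖ ≈ ‖u‖_{Vᵢ}` and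
implicit constants independent of `i`. -/
theorem sqrt_kato_decomposition {V H : Type*}
    [NormedAddCommGroup V] [InnerProductSpace ℂ V] [CompleteSpace V]
    [NormedAddCommGroup H] [InnerProductSpace ℂ H] [CompleteSpace H]
    {ι : Type*} [Countable ι]
    (Q : ι → H →L[ℂ] H)
    (hidem : ∀ i, ∀ u, Q i (Q i u) = Q i u)
    (hsa : ∀ i, ∀ u v, ⟪Q i u, v⟫_ℂ = ⟪u, Q i v⟫_ℂ)
    (hpair : ∀ i j, i ≠ j → ∀ u, Q i (Q j u) = 0)
    (hsum : ∀ u : H, HasSum (fun i => Q i u) u)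
    (e : V →L[ℂ] H) (hinj : Function.Injective e) (hdense : DenseRange e)
    (QV : ι → V →L[ℂ] V)
    (hQV : ∀ i, ∀ v : V, e (QV i v) = Q i (e v))
    (hsumV : ∀ v : V, HasSum (fun i => QV i v) v)
    (α β : ℝ) (hα : 0 < α) (hβ : 0 < β)
    (hisoV : ∀ v : V, Summable (fun i => ‖QV i v‖ ^ 2) ∧
      α * ‖v‖ ^ 2 ≤ ∑' i, ‖QV i v‖ ^ 2 ∧ ∑' i, ‖QV i v‖ ^ 2 ≤ β * ‖v‖ ^ 2)
    (L : H →ₗ.[ℂ] H)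
    (hLdense : Dense (L.domain : Set H))
    (hmaxacc : ∀ z : ℂ, 0 < z.re → ∃ R : H →L[ℂ] H,
      (∀ u : L.domain, R (z • (u : H) + L u) = u) ∧
      (∀ v : H, ∃ hv : R v ∈ L.domain, z • R v + L ⟨R v, hv⟩ = v) ∧
      ‖R‖ ≤ (z.re)⁻¹)
    (Linv : H →L[ℂ] H)
    (hLinv₁ : ∀ u : L.domain, Linv (L u) = u)
    (hLinv₂ : ∀ v : H, ∃ hv : Linv v ∈ L.domain, L ⟨Linv v, hv⟩ = v)
    (hLcomm : ∀ i, ∀ u : L.domain, ∃ h : Q i u ∈ L.domain,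
      Q i (L u) = L ⟨Q i (u : H), h⟩)
    (Rt : H →ₗ.[ℂ] H)
    (hRtdense : Dense (Rt.domain : Set H))
    (hRtacc : ∀ u : Rt.domain, 0 ≤ (⟪Rt u, (u : H)⟫_ℂ).re)
    (hRtmaxacc : ∀ z : ℂ, 0 < z.re → ∃ R : H →L[ℂ] H,
      (∀ u : Rt.domain, R (z • (u : H) + Rt u) = u) ∧
      (∀ v : H, ∃ hv : R v ∈ Rt.domain, z • R v + Rt ⟨R v, hv⟩ = v) ∧
      ‖R‖ ≤ (z.re)⁻¹)
    (hsq_dom : ∀ x : H, x ∈ L.domain ↔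
      ∃ h : x ∈ Rt.domain, Rt ⟨x, h⟩ ∈ Rt.domain)
    (hsq : ∀ (x : H) (hx : x ∈ L.domain) (h₁ : x ∈ Rt.domain)
      (h₂ : Rt ⟨x, h₁⟩ ∈ Rt.domain), Rt ⟨Rt ⟨x, h₁⟩, h₂⟩ = L ⟨x, hx⟩)
    (hRtcomm : ∀ i, ∀ u : Rt.domain, ∃ h : Q i u ∈ Rt.domain,
      Q i (Rt u) = Rt ⟨Q i (u : H), h⟩) :
    ((∀ x : H, x ∈ Rt.domain ↔ ∃ v : V, e v = x) ∧
      ∃ c₁ c₂ : ℝ, 0 < c₁ ∧ 0 < c₂ ∧ ∀ (v : V) (h : e v ∈ Rt.domain),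
        c₁ * ‖v‖ ≤ ‖Rt ⟨e v, h⟩‖ ∧ ‖Rt ⟨e v, h⟩‖ ≤ c₂ * ‖v‖) ↔
    (∃ c₁ c₂ : ℝ, 0 < c₁ ∧ 0 < c₂ ∧ ∀ i : ι,
      (∀ x : H, Q i x = x → (x ∈ Rt.domain ↔ ∃ v : V, e v = x)) ∧
      ∀ (v : V), Q i (e v) = e v → ∀ h : e v ∈ Rt.domain,
        c₁ * ‖v‖ ≤ ‖Rt ⟨e v, h⟩‖ ∧ ‖Rt ⟨e v, h⟩‖ ≤ c₂ * ‖v‖) := by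
  classical
  -- Pythagoras identity for the H-decomposition
  have pythQ : ∀ u : H, HasSum (fun i => ‖Q i u‖ ^ 2) (‖u‖ ^ 2) := by
    intro u
    refine pythagoras_hasSum _ u (hsum u) (fun i => ?_)
    have h1 := (hsa i u (Q i u)).symm
    rw [hidem i u] at h1
    rw [h1, inner_self_eq_norm_sq_to_K]
    norm_cast
  have Rt0 : ∀ h : (0 : H) ∈ Rt.domain, Rt ⟨0, h⟩ = 0 := by
    intro h
    have h1 : (⟨0, h⟩ : Rt.domain) = 0 := Subtype.ext rfl
    rw [h1]; exact Rt.map_zero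
  -- finite Pythagoras for families compatible with Q
  have key : ∀ (f : ι → H), (∀ i, Q i (f i) = f i) → (∀ i j, j ≠ i → Q j (f i) = 0) →
      ∀ t : Finset ι, ‖∑ i ∈ t, f i‖ ^ 2 = ∑ i ∈ t, ‖f i‖ ^ 2 := by
    intro f hd ho t
    have hQs : ∀ j, Q j (∑ i ∈ t, f i) = if j ∈ t then f j else 0 := by
      intro j
      rw [map_sum]
      by_cases hj : j ∈ t
      · rw [if_pos hj]
        rw [Finset.sum_eq_single_of_mem j hj (fun i _ hij => ho i j hij.symm)]
        exact hd j
      · rw [if_neg hj]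
        exact Finset.sum_eq_zero (fun i hi => ho i j (fun hji => hj (hji ▸ hi)))
    have h1 := (pythQ (∑ i ∈ t, f i)).tsum_eq
    rw [← h1]
    rw [tsum_eq_sum (s := t) (f := fun j => ‖Q j (∑ i ∈ t, f i)‖ ^ 2)
      (fun j hj => by simp only [hQs j, if_neg hj]; simp)]
    exact Finset.sum_congr rfl (fun j hj => by simp only [hQs j, if_pos hj])
  -- analogous bound in V
  have keyV : ∀ (f : ι → V), (∀ i, QV i (f i) = f i) → (∀ i j, j ≠ i → QV j (f i) = 0) →
      ∀ t : Finset ι, ‖∑ i ∈ t, f i‖ ^ 2 ≤ α⁻¹ * ∑ i ∈ t, ‖f i‖ ^ 2 := by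
    intro f hd ho t
    have hQs : ∀ j, QV j (∑ i ∈ t, f i) = if j ∈ t then f j else 0 := by
      intro j
      rw [map_sum]
      by_cases hj : j ∈ t
      · rw [if_pos hj]
        rw [Finset.sum_eq_single_of_mem j hj (fun i _ hij => ho i j hij.symm)]
        exact hd j
      · rw [if_neg hj]
        exact Finset.sum_eq_zero (fun i hi => ho i j (fun hji => hj (hji ▸ hi)))
    obtain ⟨-, hlow, -⟩ := hisoV (∑ i ∈ t, f i)
    rw [tsum_eq_sum (s := t) (f := fun j => ‖QV j (∑ i ∈ t, f i)‖ ^ 2)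
      (fun j hj => by simp only [hQs j, if_neg hj]; simp)] at hlow
    have h2 : ∑ j ∈ t, ‖QV j (∑ i ∈ t, f i)‖ ^ 2 = ∑ j ∈ t, ‖f j‖ ^ 2 :=
      Finset.sum_congr rfl (fun j hj => by simp only [hQs j, if_pos hj])
    rw [h2] at hlow
    rw [inv_mul_eq_div]
    exact (le_div_iff₀' hα).mpr hlow
  constructor
  · rintro ⟨hmem, c₁, c₂, hc₁, hc₂, hest⟩
    exact ⟨c₁, c₂, hc₁, hc₂, fun i => ⟨fun x _ => hmem x, fun v _ h => hest v h⟩⟩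
  · rintro ⟨c₁, c₂, hc₁, hc₂, hloc⟩
    have domQ : ∀ (v : V) (i : ι), Q i (e v) ∈ Rt.domain := by
      intro v i
      exact ((hloc i).1 (Q i (e v)) (hidem i (e v))).mpr ⟨QV i v, hQV i v⟩
    set g : V → ι → H := fun v i => Rt ⟨Q i (e v), domQ v i⟩ with hg
    have gdiag : ∀ v i, Q i (g v i) = g v i := by
      intro v i
      obtain ⟨h', hcomm⟩ := hRtcomm i ⟨Q i (e v), domQ v i⟩
      rw [hg]; dsimp only
      rw [hcomm]
      congr 1
      exact Subtype.ext (hidem i (e v))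
    have goff : ∀ v i j, j ≠ i → Q j (g v i) = 0 := by
      intro v i j hne
      obtain ⟨h', hcomm⟩ := hRtcomm j ⟨Q i (e v), domQ v i⟩
      rw [hg]; dsimp only
      rw [hcomm]
      have h0 : (0 : H) ∈ Rt.domain := by rw [← hpair j i hne (e v)]; exact h'
      have hz : (⟨Q j (Q i (e v)), h'⟩ : Rt.domain) = ⟨0, h0⟩ :=
        Subtype.ext (hpair j i hne (e v))
      rw [hz, Rt0]
    have gest : ∀ v i, c₁ * ‖QV i v‖ ≤ ‖g v i‖ ∧ ‖g v i‖ ≤ c₂ * ‖QV i v‖ := by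
      intro v i
      have hQe : Q i (e (QV i v)) = e (QV i v) := by rw [hQV i v, hidem]
      have hm : e (QV i v) ∈ Rt.domain := by rw [hQV i v]; exact domQ v i
      have hb := (hloc i).2 (QV i v) hQe hm
      have heq : Rt ⟨e (QV i v), hm⟩ = g v i := by
        rw [hg]; dsimp only; congr 1; exact Subtype.ext (hQV i v)
      rwa [heq] at hb
    have gval : ∀ (v : V) (h : e v ∈ Rt.domain) (i : ι), Q i (Rt ⟨e v, h⟩) = g v i := by
      intro v h i
      obtain ⟨h', hcomm⟩ := hRtcomm i ⟨e v, h⟩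
      rw [hcomm, hg]
    have gsum : ∀ v : V, Summable (fun i => ‖g v i‖ ^ 2) := by
      intro v
      refine Summable.of_nonneg_of_le (fun i => sq_nonneg _) (fun i => ?_)
        (((hisoV v).1).mul_left (c₂ ^ 2))
      calc ‖g v i‖ ^ 2 ≤ (c₂ * ‖QV i v‖) ^ 2 :=
            pow_le_pow_left₀ (norm_nonneg _) (gest v i).2 2
      _ = c₂ ^ 2 * ‖QV i v‖ ^ 2 := by ring
    have gSummable : ∀ v : V, Summable (g v) := fun v =>
      summable_of_sq (g v) 1 one_pos
        (fun t => by rw [key (g v) (gdiag v) (goff v) t, one_mul]) (gsum v)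
    have memV : ∀ v : V, ∃ h : e v ∈ Rt.domain, Rt ⟨e v, h⟩ = ∑' i, g v i := by
      intro v
      set wsum : Finset ι → Rt.domain := fun t => ∑ i ∈ t, ⟨Q i (e v), domQ v i⟩ with hws
      have hcoe : ∀ t, ((wsum t : H)) = ∑ i ∈ t, Q i (e v) := by
        intro t; rw [hws]; dsimp only
        exact Submodule.coe_sum _ _ _
      have hRtw : ∀ t, Rt (wsum t) = ∑ i ∈ t, g v i := by
        intro t; rw [hws]; dsimp only
        exact map_sum Rt.toFun _ t
      have hx : Filter.Tendsto (fun t => ((wsum t : H))) Filter.atTop (nhds (e v)) := by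
        rw [show (fun t => ((wsum t : H))) = fun t => ∑ i ∈ t, Q i (e v) from funext hcoe]
        exact hsum (e v)
      have hy : Filter.Tendsto (fun t => Rt (wsum t)) Filter.atTop (nhds (∑' i, g v i)) := by
        rw [show (fun t => Rt (wsum t)) = fun t => ∑ i ∈ t, g v i from funext hRtw]
        exact (gSummable v).hasSum
      exact closed_of_resolvent Rt hRtmaxacc wsum hx hy
    have estim : ∀ (v : V) (h : e v ∈ Rt.domain),
        c₁ * Real.sqrt α * ‖v‖ ≤ ‖Rt ⟨e v, h⟩‖ ∧
        ‖Rt ⟨e v, h⟩‖ ≤ c₂ * Real.sqrt β * ‖v‖ := by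
      intro v h
      have hps := pythQ (Rt ⟨e v, h⟩)
      simp only [gval v h] at hps
      have h3 := hps.tsum_eq
      obtain ⟨hsummQV, hlo, hhi⟩ := hisoV v
      have hub : ∑' i, ‖g v i‖ ^ 2 ≤ c₂ ^ 2 * ∑' i, ‖QV i v‖ ^ 2 := by
        rw [← tsum_mul_left]
        exact Summable.tsum_le_tsum
          (fun i => by nlinarith [(gest v i).2, norm_nonneg (g v i), norm_nonneg (QV i v)])
          (gsum v) (hsummQV.mul_left _)
      have hlb : c₁ ^ 2 * ∑' i, ‖QV i v‖ ^ 2 ≤ ∑' i, ‖g v i‖ ^ 2 := by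
        rw [← tsum_mul_left]
        exact Summable.tsum_le_tsum
          (fun i => by nlinarith [(gest v i).1, norm_nonneg (QV i v), mul_nonneg hc₁.le (norm_nonneg (QV i v))])
          (hsummQV.mul_left _) (gsum v)
      constructor
      · refine le_of_pow_le_pow_left₀ two_ne_zero (norm_nonneg _) ?_
        calc (c₁ * Real.sqrt α * ‖v‖) ^ 2 = c₁ ^ 2 * (α * ‖v‖ ^ 2) := by
              rw [mul_pow, mul_pow, Real.sq_sqrt hα.le]; ring
        _ ≤ c₁ ^ 2 * ∑' i, ‖QV i v‖ ^ 2 :=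
              mul_le_mul_of_nonneg_left hlo (sq_nonneg c₁)
        _ ≤ ∑' i, ‖g v i‖ ^ 2 := hlb
        _ = ‖Rt ⟨e v, h⟩‖ ^ 2 := h3
      · refine le_of_pow_le_pow_left₀ two_ne_zero (by positivity) ?_
        calc ‖Rt ⟨e v, h⟩‖ ^ 2 = ∑' i, ‖g v i‖ ^ 2 := h3.symm
        _ ≤ c₂ ^ 2 * ∑' i, ‖QV i v‖ ^ 2 := hub
        _ ≤ c₂ ^ 2 * (β * ‖v‖ ^ 2) := mul_le_mul_of_nonneg_left hhi (sq_nonneg c₂)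
        _ = (c₂ * Real.sqrt β * ‖v‖) ^ 2 := by
              rw [mul_pow, mul_pow, Real.sq_sqrt hβ.le]; ring
    refine ⟨?_, c₁ * Real.sqrt α, c₂ * Real.sqrt β, by positivity, by positivity,
      fun v h => estim v h⟩
    intro x
    constructor
    · intro hx
      have comp : ∀ i, ∃ v_i : V, e v_i = Q i x := by
        intro i
        obtain ⟨h', -⟩ := hRtcomm i ⟨x, hx⟩
        exact ((hloc i).1 (Q i x) (hidem i x)).mp h'
      choose vv hvv using comp
      have hdiagV : ∀ i, QV i (vv i) = vv i := by
        intro i; apply hinj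
        rw [hQV, hvv, hidem]
      have hoffV : ∀ i j, j ≠ i → QV j (vv i) = 0 := by
        intro i j hne; apply hinj
        rw [hQV, hvv, map_zero]
        exact hpair j i hne x
      have hnorm : ∀ i, c₁ * ‖vv i‖ ≤ ‖Q i (Rt ⟨x, hx⟩)‖ := by
        intro i
        obtain ⟨h', hcomm⟩ := hRtcomm i ⟨x, hx⟩
        have hQe : Q i (e (vv i)) = e (vv i) := by rw [hvv, hidem]
        have hm : e (vv i) ∈ Rt.domain := by rw [hvv]; exact h'
        have hb := ((hloc i).2 (vv i) hQe hm).1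
        have heq : Rt ⟨e (vv i), hm⟩ = Q i (Rt ⟨x, hx⟩) := by
          rw [hcomm]; congr 1; exact Subtype.ext (hvv i)
        rwa [heq] at hb
      have hsumv : Summable (fun i => ‖vv i‖ ^ 2) := by
        refine Summable.of_nonneg_of_le (fun i => sq_nonneg _) (fun i => ?_)
          (((pythQ (Rt ⟨x, hx⟩)).summable).mul_left (c₁ ^ 2)⁻¹)
        have h2 : (c₁ * ‖vv i‖) ^ 2 ≤ ‖Q i (Rt ⟨x, hx⟩)‖ ^ 2 :=
          pow_le_pow_left₀ (mul_nonneg hc₁.le (norm_nonneg _)) (hnorm i) 2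
        rw [mul_pow] at h2
        rw [inv_mul_eq_div]
        exact (le_div_iff₀' (by positivity)).mpr h2
      have hsummv : Summable vv :=
        summable_of_sq vv α⁻¹ (inv_pos.mpr hα) (fun t => keyV vv hdiagV hoffV t) hsumv
      refine ⟨∑' i, vv i, ?_⟩
      have h1 : HasSum (fun i => e (vv i)) (e (∑' i, vv i)) := hsummv.hasSum.mapL e
      have h2 : HasSum (fun i => Q i x) (e (∑' i, vv i)) := by
        rw [show (fun i => Q i x) = fun i => e (vv i) from funext (fun i => (hvv i).symm)]
        exact h1
      exact h2.unique (hsum x)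
    · rintro ⟨v, rfl⟩
      exact (memV v).1
end
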